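/- arXiv:2211.01416 — 3 statements merged into one kernel-verified Lean document; each statement's English description precedes it below -/
import Mathlib

section
/- Let R be a commutative ring with unity in which 2 is invertible (R = 2R) and let φ be an invertible skew-symmetric matrix of size 2n over R. Then for all v, w ∈ R^{2n−1}: C_φ(v+w) = C_φ(v/2) C_φ(w) C_φ(v/2) and R_φ(v+w) = R_φ(v/2) R_φ(w) R_φ(v/2), where v/2 denotes 2^{−1}·v. -/
/- Common definitions: symplectic groups with respect to an invertible
   skew-symmetric (alternating) matrix, elementary symplectic groups,
   Pfaffian, standard symplectic matrix, elementary linear groups. -/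

namespace PaperESp

open Matrix

variable {R : Type*} [CommRing R]

/-- The Pfaffian of a `2n × 2n` matrix, as the sum over perfect matchings. -/
def pf {n : ℕ} (A : Matrix (Fin (2*n)) (Fin (2*n)) R) : R :=
  ∑ σ ∈ Finset.univ.filter (fun σ : Equiv.Perm (Fin (2*n)) =>
      (∀ k : Fin n, (σ ⟨2*k.1, by have := k.2; omega⟩).1 < (σ ⟨2*k.1+1, by have := k.2; omega⟩).1) ∧
      (∀ k l : Fin n, k < l →
        (σ ⟨2*k.1, by have := k.2; omega⟩).1 < (σ ⟨2*l.1, by have := l.2; omega⟩).1)),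
    ((Equiv.Perm.sign σ : ℤ) : R) *
      ∏ k : Fin n, A (σ ⟨2*k.1, by have := k.2; omega⟩) (σ ⟨2*k.1+1, by have := k.2; omega⟩)

/-- `φ = [[0, -cᵀ],[c, ν]]`: the column `c`. -/
def cvec {n : ℕ} (φ : Matrix (Fin (2*n)) (Fin (2*n)) R) : Fin (2*n-1) → R :=
  fun i => φ ⟨i.1+1, by have := i.2; omega⟩ ⟨0, by have := i.2; omega⟩

/-- `φ = [[0, -cᵀ],[c, ν]]`: the block `ν`. -/
def nuMat {n : ℕ} (φ : Matrix (Fin (2*n)) (Fin (2*n)) R) :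
    Matrix (Fin (2*n-1)) (Fin (2*n-1)) R :=
  Matrix.of fun i j => φ ⟨i.1+1, by have := i.2; omega⟩ ⟨j.1+1, by have := j.2; omega⟩

/-- `φ⁻¹ = [[0, dᵀ],[-d, μ]]`: the row `d`. -/
noncomputable def dvec {n : ℕ} (φ : Matrix (Fin (2*n)) (Fin (2*n)) R) : Fin (2*n-1) → R :=
  fun i => φ⁻¹ ⟨0, by have := i.2; omega⟩ ⟨i.1+1, by have := i.2; omega⟩

/-- `φ⁻¹ = [[0, dᵀ],[-d, μ]]`: the block `μ`. -/
noncomputable def muMat {n : ℕ} (φ : Matrix (Fin (2*n)) (Fin (2*n)) R) :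
    Matrix (Fin (2*n-1)) (Fin (2*n-1)) R :=
  Matrix.of fun i j => φ⁻¹ ⟨i.1+1, by have := i.2; omega⟩ ⟨j.1+1, by have := j.2; omega⟩

/-- Vaserstein's matrix `α_φ(v) = I + d vᵀ ν`. -/
noncomputable def alphaMat {n : ℕ} (φ : Matrix (Fin (2*n)) (Fin (2*n)) R) (v : Fin (2*n-1) → R) :
    Matrix (Fin (2*n-1)) (Fin (2*n-1)) R :=
  1 + Matrix.of fun i j => dvec φ i * ∑ k, v k * nuMat φ k j

/-- Vaserstein's matrix `β_φ(v) = I + μ v cᵀ`. -/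
noncomputable def betaMat {n : ℕ} (φ : Matrix (Fin (2*n)) (Fin (2*n)) R) (v : Fin (2*n-1) → R) :
    Matrix (Fin (2*n-1)) (Fin (2*n-1)) R :=
  1 + Matrix.of fun i j => (∑ k, muMat φ i k * v k) * cvec φ j

/-- The generator `C_φ(v) = [[1, 0],[v, α_φ(v)]]`. -/
noncomputable def Cmat {n : ℕ} (φ : Matrix (Fin (2*n)) (Fin (2*n)) R) (v : Fin (2*n-1) → R) :
    Matrix (Fin (2*n)) (Fin (2*n)) R :=
  Matrix.of fun i j =>
    if hi : i.1 = 0 then (if j.1 = 0 then (1:R) else 0)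
    else if hj : j.1 = 0 then v ⟨i.1-1, by have := i.2; omega⟩
    else alphaMat φ v ⟨i.1-1, by have := i.2; omega⟩ ⟨j.1-1, by have := j.2; omega⟩

/-- The generator `R_φ(v) = [[1, vᵀ],[0, β_φ(v)]]`. -/
noncomputable def Rmat {n : ℕ} (φ : Matrix (Fin (2*n)) (Fin (2*n)) R) (v : Fin (2*n-1) → R) :
    Matrix (Fin (2*n)) (Fin (2*n)) R :=
  Matrix.of fun i j =>
    if hi : i.1 = 0 then (if hj : j.1 = 0 then (1:R) else v ⟨j.1-1, by have := j.2; omega⟩)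
    else if hj : j.1 = 0 then 0
    else betaMat φ v ⟨i.1-1, by have := i.2; omega⟩ ⟨j.1-1, by have := j.2; omega⟩

/-- The symplectic group `Sp_φ(R) = {α ∈ GL_m(R) | αᵀ φ α = φ}`, as a subgroup of the
    units of the matrix ring. -/
def Sp {m : ℕ} (φ : Matrix (Fin m) (Fin m) R) : Subgroup (Matrix (Fin m) (Fin m) R)ˣ where
  carrier := {g | (↑g : Matrix (Fin m) (Fin m) R)ᵀ * φ * (↑g : Matrix (Fin m) (Fin m) R) = φ}
  one_mem' := by simp
  mul_mem' := by
    intro a b ha hb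
    simp only [Set.mem_setOf_eq, Units.val_mul] at *
    have h : ((↑a : Matrix (Fin m) (Fin m) R) * (↑b : Matrix (Fin m) (Fin m) R))ᵀ * φ *
          ((↑a : Matrix (Fin m) (Fin m) R) * (↑b : Matrix (Fin m) (Fin m) R))
        = (↑b : Matrix (Fin m) (Fin m) R)ᵀ *
            ((↑a : Matrix (Fin m) (Fin m) R)ᵀ * φ * (↑a : Matrix (Fin m) (Fin m) R)) *
            (↑b : Matrix (Fin m) (Fin m) R) := by
      simp only [Matrix.transpose_mul, Matrix.mul_assoc]
    rw [h, ha, hb]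
  inv_mem' := by
    intro a ha
    simp only [Set.mem_setOf_eq] at *
    have h : (↑a⁻¹ : Matrix (Fin m) (Fin m) R)ᵀ * φ * (↑a⁻¹ : Matrix (Fin m) (Fin m) R)
        = (↑a⁻¹ : Matrix (Fin m) (Fin m) R)ᵀ *
            ((↑a : Matrix (Fin m) (Fin m) R)ᵀ * φ * (↑a : Matrix (Fin m) (Fin m) R)) *
            (↑a⁻¹ : Matrix (Fin m) (Fin m) R) := by
      rw [ha]
    rw [h]
    have h2 : (↑a⁻¹ : Matrix (Fin m) (Fin m) R)ᵀ *
          ((↑a : Matrix (Fin m) (Fin m) R)ᵀ * φ * (↑a : Matrix (Fin m) (Fin m) R)) *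
          (↑a⁻¹ : Matrix (Fin m) (Fin m) R)
        = ((↑a : Matrix (Fin m) (Fin m) R) * (↑a⁻¹ : Matrix (Fin m) (Fin m) R))ᵀ * φ *
          ((↑a : Matrix (Fin m) (Fin m) R) * (↑a⁻¹ : Matrix (Fin m) (Fin m) R)) := by
      simp only [Matrix.transpose_mul, Matrix.mul_assoc]
    rw [h2, Units.mul_inv]
    simp

/-- The elementary symplectic group `ESp_φ(R)` with respect to `φ`, generated by the
    `C_φ(v)` and `R_φ(v)`. -/
def Esp {n : ℕ} (φ : Matrix (Fin (2*n)) (Fin (2*n)) R) :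
    Subgroup (Matrix (Fin (2*n)) (Fin (2*n)) R)ˣ :=
  Subgroup.closure {g | ∃ v : Fin (2*n-1) → R,
    (↑g : Matrix (Fin (2*n)) (Fin (2*n)) R) = Cmat φ v ∨
    (↑g : Matrix (Fin (2*n)) (Fin (2*n)) R) = Rmat φ v}

/-- `ESp_φ(I)`, generated by the `C_φ(v)`, `R_φ(v)` with `v ∈ I^{2n-1}`. -/
def EspIdeal {n : ℕ} (φ : Matrix (Fin (2*n)) (Fin (2*n)) R) (I : Ideal R) :
    Subgroup (Matrix (Fin (2*n)) (Fin (2*n)) R)ˣ :=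
  Subgroup.closure {g | ∃ v : Fin (2*n-1) → R, (∀ i, v i ∈ I) ∧
    ((↑g : Matrix (Fin (2*n)) (Fin (2*n)) R) = Cmat φ v ∨
     (↑g : Matrix (Fin (2*n)) (Fin (2*n)) R) = Rmat φ v)}

/-- The relative elementary symplectic group `ESp_φ(R,I)`: the normal closure of
    `ESp_φ(I)` in `ESp_φ(R)`. -/
def REsp {n : ℕ} (φ : Matrix (Fin (2*n)) (Fin (2*n)) R) (I : Ideal R) :
    Subgroup (Matrix (Fin (2*n)) (Fin (2*n)) R)ˣ :=
  Subgroup.closure {g | ∃ e ∈ Esp φ, ∃ x ∈ EspIdeal φ I, g = e * x * e⁻¹}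

/-- The standard skew-symmetric matrix `ψ_n = Σ (e_{2i-1,2i} - e_{2i,2i-1})` (1-based). -/
def psi (R : Type*) [CommRing R] (n : ℕ) : Matrix (Fin (2*n)) (Fin (2*n)) R :=
  Matrix.of fun i j =>
    if i.1 + 1 = j.1 ∧ j.1 % 2 = 1 then (1:R)
    else if j.1 + 1 = i.1 ∧ i.1 % 2 = 1 then -1
    else 0

/-- The permutation `σ` of `{1,…,2n}` with `σ(2i-1) = 2i`, `σ(2i) = 2i-1` (0-based swap of
    `2i ↔ 2i+1`). -/
def sigmaFn (n : ℕ) (i : Fin (2*n)) : Fin (2*n) :=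
  if h : i.1 % 2 = 0 then ⟨i.1+1, by have := i.2; omega⟩ else ⟨i.1-1, by have := i.2; omega⟩

/-- The elementary symplectic generators `se_{ij}(a)`. -/
def seMat {R : Type*} [CommRing R] (n : ℕ) (i j : Fin (2*n)) (a : R) :
    Matrix (Fin (2*n)) (Fin (2*n)) R :=
  if i = sigmaFn n j then 1 + Matrix.single i j a
  else 1 + Matrix.single i j a
         - Matrix.single (sigmaFn n j) (sigmaFn n i) ((-1:R)^(i.1+j.1) * a)

/-- The elementary symplectic group `ESp_{2n}(R)`. -/
def Esp2n (R : Type*) [CommRing R] (n : ℕ) : Subgroup (Matrix (Fin (2*n)) (Fin (2*n)) R)ˣ :=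
  Subgroup.closure {g | ∃ i j : Fin (2*n), ∃ a : R, i ≠ j ∧
    (↑g : Matrix (Fin (2*n)) (Fin (2*n)) R) = seMat n i j a}

/-- `ESp_{2n}(I)`. -/
def Esp2nIdeal (R : Type*) [CommRing R] (n : ℕ) (I : Ideal R) :
    Subgroup (Matrix (Fin (2*n)) (Fin (2*n)) R)ˣ :=
  Subgroup.closure {g | ∃ i j : Fin (2*n), ∃ x : R, i ≠ j ∧ x ∈ I ∧
    (↑g : Matrix (Fin (2*n)) (Fin (2*n)) R) = seMat n i j x}

/-- The relative elementary symplectic group `ESp_{2n}(R,I)`: the normal closure of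
    `ESp_{2n}(I)` in `ESp_{2n}(R)`. -/
def REsp2n (R : Type*) [CommRing R] (n : ℕ) (I : Ideal R) :
    Subgroup (Matrix (Fin (2*n)) (Fin (2*n)) R)ˣ :=
  Subgroup.closure {g | ∃ e ∈ Esp2n R n, ∃ x ∈ Esp2nIdeal R n I, g = e * x * e⁻¹}

/-- The elementary linear group `E_m(R)`. -/
def Egrp (R : Type*) [CommRing R] (m : ℕ) : Subgroup (Matrix (Fin m) (Fin m) R)ˣ :=
  Subgroup.closure {g | ∃ i j : Fin m, ∃ a : R, i ≠ j ∧
    (↑g : Matrix (Fin m) (Fin m) R) = 1 + Matrix.single i j a}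

/-- `E_m(I)`. -/
def EgrpIdeal (R : Type*) [CommRing R] (m : ℕ) (I : Ideal R) :
    Subgroup (Matrix (Fin m) (Fin m) R)ˣ :=
  Subgroup.closure {g | ∃ i j : Fin m, ∃ x : R, i ≠ j ∧ x ∈ I ∧
    (↑g : Matrix (Fin m) (Fin m) R) = 1 + Matrix.single i j x}

/-- The relative elementary linear group `E_m(R,I)`: the normal closure of `E_m(I)`
    in `E_m(R)`. -/
def REgrp (R : Type*) [CommRing R] (m : ℕ) (I : Ideal R) :
    Subgroup (Matrix (Fin m) (Fin m) R)ˣ :=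
  Subgroup.closure {g | ∃ e ∈ Egrp R m, ∃ x ∈ EgrpIdeal R m I, g = e * x * e⁻¹}

/-- `1 ⊥ β`: the block diagonal matrix `diag(1, β)` of size `2n`. -/
def onePerp {n : ℕ} (β : Matrix (Fin (2*n-1)) (Fin (2*n-1)) R) :
    Matrix (Fin (2*n)) (Fin (2*n)) R :=
  Matrix.of fun i j =>
    if hi : i.1 = 0 then (if j.1 = 0 then (1:R) else 0)
    else if hj : j.1 = 0 then 0
    else β ⟨i.1-1, by have := i.2; omega⟩ ⟨j.1-1, by have := j.2; omega⟩

/-- The congruence kernel: invertible matrices reducing to the identity modulo `I`. -/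
def congrKer (R : Type*) [CommRing R] (m : ℕ) (I : Ideal R) :
    Subgroup (Matrix (Fin m) (Fin m) R)ˣ :=
  (Units.map ((Ideal.Quotient.mk I).mapMatrix.toMonoidHom :
      Matrix (Fin m) (Fin m) R →* Matrix (Fin m) (Fin m) (R ⧸ I))).ker

/-- `Sp_φ(R,I)`: the kernel of the reduction map `Sp_φ(R) → Sp_φ(R/I)`. -/
def SpRel {m : ℕ} (φ : Matrix (Fin m) (Fin m) R) (I : Ideal R) :
    Subgroup (Matrix (Fin m) (Fin m) R)ˣ :=
  Sp φ ⊓ congrKer R m I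


section Aux

variable {R : Type*} [CommRing R]

/-- Column vector as an `m × 1` matrix. -/
def colv {m : ℕ} (v : Fin m → R) : Matrix (Fin m) (Fin 1) R :=
  Matrix.of fun i _ => v i

/-- Row vector as a `1 × m` matrix. -/
def rowv {m : ℕ} (v : Fin m → R) : Matrix (Fin 1) (Fin m) R :=
  Matrix.of fun _ j => v j

lemma colv_add {m : ℕ} (a b : Fin m → R) : colv (a + b) = colv a + colv b := by
  ext i j; simp [colv]

lemma rowv_add {m : ℕ} (a b : Fin m → R) : rowv (a + b) = rowv a + rowv b := by
  ext i j; simp [rowv]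

/-- Splitting `Fin (2*n)` as `Fin 1 ⊕ Fin (2*n-1)`. -/
def spl (n : ℕ) (hn : 0 < n) : (Fin 1 ⊕ Fin (2*n-1)) ≃ Fin (2*n) where
  toFun s := s.elim (fun _ => ⟨0, by omega⟩) (fun k => ⟨k.1+1, by have := k.2; omega⟩)
  invFun i := if h : i.1 = 0 then .inl 0 else .inr ⟨i.1-1, by have := i.2; omega⟩
  left_inv s := by
    rcases s with a | k
    · simp [Fin.fin_one_eq_zero a]
    · simp [Fin.ext_iff]
  right_inv i := by
    by_cases h : i.1 = 0
    · simp [h, Fin.ext_iff]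
    · simp only [dif_neg h, Sum.elim_inr, Fin.ext_iff]
      omega

lemma sum_split {n : ℕ} (hn : 0 < n) (f : Fin (2*n) → R) :
    ∑ l, f l = f ⟨0, by omega⟩ + ∑ k : Fin (2*n-1), f ⟨k.1+1, by have := k.2; omega⟩ := by
  rw [← Equiv.sum_comp (spl n hn) f, Fintype.sum_sum_type]
  simp [spl]

lemma half_cancel {x : R} [Invertible (2 : R)] (h : x + x = 0) : x = 0 := by
  have h2 : (2:R) * x = 0 := by linear_combination h
  calc x = ⅟(2:R) * ((2:R) * x) := by rw [invOf_mul_cancel_left]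
  _ = 0 := by rw [h2, mul_zero]

section Phi

variable {n : ℕ} (φ : Matrix (Fin (2*n)) (Fin (2*n)) R)

lemma alpha_eq (v : Fin (2*n-1) → R) :
    alphaMat φ v = 1 + colv (dvec φ) * (rowv v * nuMat φ) := by
  ext i j
  simp [alphaMat, colv, rowv, Matrix.mul_apply, Matrix.add_apply, Finset.mul_sum]

lemma beta_eq (v : Fin (2*n-1) → R) :
    betaMat φ v = 1 + (muMat φ * colv v) * rowv (cvec φ) := by
  ext i j
  simp [betaMat, colv, rowv, Matrix.mul_apply, Matrix.add_apply, Finset.sum_mul]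

lemma pair_skew {N : Matrix (Fin (2*n-1)) (Fin (2*n-1)) R}
    (hN : ∀ l k, N l k = - N k l) (a b : Fin (2*n-1) → R) :
    rowv a * N * colv b + rowv b * N * colv a = 0 := by
  ext i j
  simp only [Matrix.mul_apply, rowv, colv, Matrix.of_apply, Matrix.add_apply,
    Matrix.zero_apply, Finset.sum_mul]
  have hc : ∑ x : Fin (2*n-1), ∑ l : Fin (2*n-1), b l * N l x * a x
      = ∑ x : Fin (2*n-1), ∑ l : Fin (2*n-1), b x * N x l * a l := Finset.sum_comm
  rw [hc, ← Finset.sum_add_distrib]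
  refine Finset.sum_eq_zero fun k _ => ?_
  rw [← Finset.sum_add_distrib]
  refine Finset.sum_eq_zero fun l _ => ?_
  rw [hN l k]; ring

lemma self_skew [Invertible (2 : R)] {N : Matrix (Fin (2*n-1)) (Fin (2*n-1)) R}
    (hN : ∀ l k, N l k = - N k l) (a : Fin (2*n-1) → R) :
    rowv a * N * colv a = 0 := by
  have h := pair_skew (R := R) hN a a
  ext i j
  have h2 := congrFun (congrFun h i) j
  simp only [Matrix.add_apply, Matrix.zero_apply] at h2
  exact half_cancel h2

lemma phi_entry_skew (hskew : φᵀ = -φ) (a b : Fin (2*n)) : φ a b = - φ b a := by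
  have := congrFun (congrFun hskew b) a
  simpa [Matrix.transpose_apply] using this

lemma phi_mul_inv (hinv : IsUnit φ) : φ * φ⁻¹ = 1 :=
  Matrix.mul_nonsing_inv φ ((Matrix.isUnit_iff_isUnit_det φ).mp hinv)

lemma inv_skew (hskew : φᵀ = -φ) (hinv : IsUnit φ) : (φ⁻¹)ᵀ = -(φ⁻¹) := by
  rw [Matrix.transpose_nonsing_inv, hskew]
  refine Matrix.inv_eq_right_inv ?_
  rw [neg_mul_neg, phi_mul_inv φ hinv]

lemma phiinv_entry_skew (hskew : φᵀ = -φ) (hinv : IsUnit φ) (a b : Fin (2*n)) :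
    φ⁻¹ a b = - φ⁻¹ b a := by
  have := congrFun (congrFun (inv_skew φ hskew hinv) b) a
  simpa [Matrix.transpose_apply] using this

lemma nu_skew (hskew : φᵀ = -φ) : ∀ l k : Fin (2*n-1), nuMat φ l k = - nuMat φ k l :=
  fun _ _ => phi_entry_skew φ hskew _ _

lemma mu_skew (hskew : φᵀ = -φ) (hinv : IsUnit φ) :
    ∀ l k : Fin (2*n-1), muMat φ l k = - muMat φ k l :=
  fun _ _ => phiinv_entry_skew φ hskew hinv _ _

variable [Invertible (2 : R)]

lemma nu_d (hskew : φᵀ = -φ) (hinv : IsUnit φ) (hn : 0 < n) :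
    nuMat φ * colv (dvec φ) = 0 := by
  ext i j
  have h0 : (φ * φ⁻¹) ⟨i.1+1, by have := i.2; omega⟩ ⟨0, by omega⟩ = 0 := by
    rw [phi_mul_inv φ hinv]
    simp [Matrix.one_apply, Fin.ext_iff]
  rw [Matrix.mul_apply, sum_split hn] at h0
  have hd00 : φ⁻¹ ⟨0, by omega⟩ ⟨0, by omega⟩ = 0 := by
    refine half_cancel ?_
    have h3 := phiinv_entry_skew φ hskew hinv ⟨0, by omega⟩ ⟨0, by omega⟩
    linear_combination h3
  rw [hd00, mul_zero, zero_add] at h0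
  have h1 : ∀ k : Fin (2*n-1),
      φ ⟨i.1+1, by have := i.2; omega⟩ ⟨k.1+1, by have := k.2; omega⟩ *
        φ⁻¹ ⟨k.1+1, by have := k.2; omega⟩ ⟨0, by omega⟩
      = - (nuMat φ i k * dvec φ k) := by
    intro k
    rw [phiinv_entry_skew φ hskew hinv]
    simp only [nuMat, dvec, Matrix.of_apply]
    ring
  rw [Finset.sum_congr rfl fun k _ => h1 k, Finset.sum_neg_distrib, neg_eq_zero] at h0
  simp only [Matrix.mul_apply, colv, Matrix.of_apply, Matrix.zero_apply]
  exact h0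

lemma c_mu (hskew : φᵀ = -φ) (hinv : IsUnit φ) (hn : 0 < n) :
    rowv (cvec φ) * muMat φ = 0 := by
  ext i j
  have h0 : (φ * φ⁻¹) ⟨0, by omega⟩ ⟨j.1+1, by have := j.2; omega⟩ = 0 := by
    rw [phi_mul_inv φ hinv]
    simp [Matrix.one_apply, Fin.ext_iff]
  rw [Matrix.mul_apply, sum_split hn] at h0
  have hc00 : φ ⟨0, by omega⟩ ⟨0, by omega⟩ = 0 := by
    refine half_cancel ?_
    have h3 := phi_entry_skew φ hskew ⟨0, by omega⟩ ⟨0, by omega⟩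
    linear_combination h3
  rw [hc00, zero_mul, zero_add] at h0
  have h1 : ∀ k : Fin (2*n-1),
      φ ⟨0, by omega⟩ ⟨k.1+1, by have := k.2; omega⟩ *
        φ⁻¹ ⟨k.1+1, by have := k.2; omega⟩ ⟨j.1+1, by have := j.2; omega⟩
      = - (cvec φ k * muMat φ k j) := by
    intro k
    rw [phi_entry_skew φ hskew ⟨0, by omega⟩ ⟨k.1+1, by have := k.2; omega⟩]
    simp only [muMat, cvec, Matrix.of_apply]
    ring
  rw [Finset.sum_congr rfl fun k _ => h1 k, Finset.sum_neg_distrib, neg_eq_zero] at h0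
  simp only [Matrix.mul_apply, rowv, Matrix.of_apply, Matrix.zero_apply]
  exact h0

lemma alpha_mul (hskew : φᵀ = -φ) (hinv : IsUnit φ) (hn : 0 < n) (a b : Fin (2*n-1) → R) :
    alphaMat φ a * alphaMat φ b = alphaMat φ (a + b) := by
  have hz : colv (dvec φ) * (rowv a * (nuMat φ * (colv (dvec φ) * (rowv b * nuMat φ)))) = 0 := by
    have hnd : nuMat φ * colv (dvec φ) = 0 := nu_d φ hskew hinv hn
    rw [show nuMat φ * (colv (dvec φ) * (rowv b * nuMat φ))
        = nuMat φ * colv (dvec φ) * (rowv b * nuMat φ) from (Matrix.mul_assoc _ _ _).symm,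
      hnd, Matrix.zero_mul, Matrix.mul_zero, Matrix.mul_zero]
  rw [alpha_eq, alpha_eq, alpha_eq, rowv_add]
  simp only [Matrix.mul_add, Matrix.add_mul, Matrix.mul_one, Matrix.one_mul, Matrix.mul_assoc]
  rw [← sub_eq_zero, ← hz]
  abel

lemma beta_mul (hskew : φᵀ = -φ) (hinv : IsUnit φ) (hn : 0 < n) (a b : Fin (2*n-1) → R) :
    betaMat φ a * betaMat φ b = betaMat φ (a + b) := by
  have hz : muMat φ * (colv a * (rowv (cvec φ) * (muMat φ * (colv b * rowv (cvec φ))))) = 0 := by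
    have hcm : rowv (cvec φ) * muMat φ = 0 := c_mu φ hskew hinv hn
    rw [show rowv (cvec φ) * (muMat φ * (colv b * rowv (cvec φ)))
        = rowv (cvec φ) * muMat φ * (colv b * rowv (cvec φ)) from (Matrix.mul_assoc _ _ _).symm,
      hcm, Matrix.zero_mul, Matrix.mul_zero, Matrix.mul_zero]
  rw [beta_eq, beta_eq, beta_eq, colv_add]
  simp only [Matrix.mul_add, Matrix.add_mul, Matrix.mul_one, Matrix.one_mul, Matrix.mul_assoc]
  rw [← sub_eq_zero, ← hz]
  abel

lemma Cmat_eq (hn : 0 < n) (v : Fin (2*n-1) → R) :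
    Cmat φ v = (Matrix.fromBlocks 1 0 (colv v) (alphaMat φ v)).submatrix
      (spl n hn).symm (spl n hn).symm := by
  ext i j
  by_cases hi : i.1 = 0 <;> by_cases hj : j.1 = 0 <;>
    simp [Cmat, spl, hi, hj, Matrix.one_apply, colv]

lemma Rmat_eq (hn : 0 < n) (v : Fin (2*n-1) → R) :
    Rmat φ v = (Matrix.fromBlocks 1 (rowv v) 0 (betaMat φ v)).submatrix
      (spl n hn).symm (spl n hn).symm := by
  ext i j
  by_cases hi : i.1 = 0 <;> by_cases hj : j.1 = 0 <;>
    simp [Rmat, spl, hi, hj, Matrix.one_apply, rowv]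

lemma keyC (hskew : φᵀ = -φ) (hinv : IsUnit φ) (a b : Fin (2*n-1) → R) :
    colv a + alphaMat φ a * colv b + alphaMat φ (a + b) * colv a = colv (a + a + b) := by
  have hp := pair_skew (nu_skew φ hskew) a b
  have hs := self_skew (nu_skew φ hskew) a
  have h' : rowv a * nuMat φ * colv b + rowv b * nuMat φ * colv a
      + rowv a * nuMat φ * colv a = 0 := by rw [hs, add_zero, hp]
  have hz : colv (dvec φ) * (rowv a * nuMat φ * colv b + rowv b * nuMat φ * colv a
      + rowv a * nuMat φ * colv a) = 0 := by rw [h', Matrix.mul_zero]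
  rw [alpha_eq, alpha_eq]
  simp only [colv_add, rowv_add, Matrix.mul_add, Matrix.add_mul, Matrix.mul_one,
    Matrix.one_mul, Matrix.mul_assoc] at hz ⊢
  rw [← sub_eq_zero, ← hz]
  abel

lemma keyR (hskew : φᵀ = -φ) (hinv : IsUnit φ) (a b : Fin (2*n-1) → R) :
    rowv a + (rowv b * betaMat φ a + rowv a * betaMat φ (b + a)) = rowv (a + a + b) := by
  have hp := pair_skew (mu_skew φ hskew hinv) a b
  have hs := self_skew (mu_skew φ hskew hinv) a
  have h' : rowv b * muMat φ * colv a + rowv a * muMat φ * colv b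
      + rowv a * muMat φ * colv a = 0 := by
    rw [hs, add_zero, add_comm, hp]
  have hz : (rowv b * muMat φ * colv a + rowv a * muMat φ * colv b
      + rowv a * muMat φ * colv a) * rowv (cvec φ) = 0 := by rw [h', Matrix.zero_mul]
  rw [beta_eq, beta_eq]
  simp only [colv_add, rowv_add, Matrix.mul_add, Matrix.add_mul, Matrix.mul_one,
    Matrix.one_mul, Matrix.mul_assoc] at hz ⊢
  rw [← sub_eq_zero, ← hz]
  abel

end Phi

end Aux

/-- splitting property of the generators `C_φ(v)` and `R_φ(v)`:
`C_φ(v+w) = C_φ(v/2) C_φ(w) C_φ(v/2)` and `R_φ(v+w) = R_φ(v/2) R_φ(w) R_φ(v/2)`. -/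
theorem generators_splitting {R : Type*} [CommRing R] [Invertible (2 : R)] (n : ℕ)
    (φ : Matrix (Fin (2*n)) (Fin (2*n)) R) (hskew : φᵀ = -φ) (hinv : IsUnit φ) :
    ∀ v w : Fin (2*n-1) → R,
      Cmat φ (v + w) = Cmat φ ((⅟(2:R)) • v) * Cmat φ w * Cmat φ ((⅟(2:R)) • v) ∧
      Rmat φ (v + w) = Rmat φ ((⅟(2:R)) • v) * Rmat φ w * Rmat φ ((⅟(2:R)) • v) := by
  intro v w
  rcases Nat.eq_zero_or_pos n with hn | hn
  · subst hn
    constructor <;> (ext i j; exact absurd i.isLt (by omega))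
  · set u : Fin (2*n-1) → R := (⅟(2:R)) • v with hu
    have huu : u + u = v := by
      ext i
      simp only [hu, Pi.add_apply, Pi.smul_apply, smul_eq_mul]
      rw [← add_mul, invOf_two_add_invOf_two, one_mul]
    constructor
    · simp only [Cmat_eq φ hn]
      rw [Matrix.submatrix_mul_equiv, Matrix.submatrix_mul_equiv]
      refine congrArg (fun M => Matrix.submatrix M ⇑(spl n hn).symm ⇑(spl n hn).symm) ?_
      rw [Matrix.fromBlocks_multiply, Matrix.fromBlocks_multiply, Matrix.fromBlocks_inj]
      refine ⟨by simp, by simp, ?_, ?_⟩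
      · simp only [Matrix.mul_one, Matrix.mul_zero, zero_add, Matrix.one_mul,
          Matrix.zero_mul, add_zero]
        rw [alpha_mul φ hskew hinv hn, keyC φ hskew hinv u w, huu]
      · simp only [Matrix.mul_zero, zero_add, Matrix.one_mul, Matrix.zero_mul,
          add_zero, Matrix.mul_one]
        rw [alpha_mul φ hskew hinv hn, alpha_mul φ hskew hinv hn]
        have : u + w + u = v + w := by rw [← huu]; abel
        rw [this]
    · simp only [Rmat_eq φ hn]
      rw [Matrix.submatrix_mul_equiv, Matrix.submatrix_mul_equiv]
      refine congrArg (fun M => Matrix.submatrix M ⇑(spl n hn).symm ⇑(spl n hn).symm) ?_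
      rw [Matrix.fromBlocks_multiply, Matrix.fromBlocks_multiply, Matrix.fromBlocks_inj]
      refine ⟨by simp, ?_, by simp, ?_⟩
      · simp only [Matrix.one_mul, Matrix.mul_zero, add_zero, Matrix.mul_one,
          Matrix.zero_mul, zero_add]
        rw [Matrix.add_mul, Matrix.mul_assoc, beta_mul φ hskew hinv hn,
          keyR φ hskew hinv u w, huu]
      · simp only [Matrix.zero_mul, zero_add, Matrix.one_mul, Matrix.mul_zero,
          add_zero, Matrix.mul_one]
        rw [beta_mul φ hskew hinv hn, beta_mul φ hskew hinv hn]
        have : u + w + u = v + w := by rw [← huu]; abel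
        rw [this]


end PaperESp
end

section
/- Let R be a commutative ring with unity in which 2 is invertible (R = 2R) and let φ be an invertible skew-symmetric matrix of size 2n over R. Then in the polynomial ring R[X] with the ideal (X): ESp_{φ⊗R[X]}(R[X], (X)) = ESp_{φ⊗R[X]}(R[X]) ∩ Sp_{φ⊗R[X]}(R[X], (X)). -/
/- Common definitions: symplectic groups with respect to an invertible
   skew-symmetric (alternating) matrix, elementary symplectic groups,
   Pfaffian, standard symplectic matrix, elementary linear groups. -/

namespace PaperESp

open Matrix

variable {R : Type*} [CommRing R]

/-! ### Auxiliary development -/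

set_option linter.unusedSectionVars false
set_option maxHeartbeats 1000000

section Aux

variable {S : Type*} [CommRing S] {n : ℕ}

/-- The index equivalence splitting off the first coordinate. -/
def be (hn : 0 < 2*n) : Fin (2*n) ≃ (Fin 1 ⊕ Fin (2*n-1)) where
  toFun i := if h : i.1 = 0 then Sum.inl 0 else Sum.inr ⟨i.1-1, by have := i.2; omega⟩
  invFun x := Sum.elim (fun _ => (⟨0, hn⟩ : Fin (2*n))) (fun j => ⟨j.1+1, by have := j.2; omega⟩) x
  left_inv i := by
    by_cases h : i.1 = 0
    · simp only [h, dif_pos]; exact Fin.ext (by simp [h.symm])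
    · simp only [h, dif_neg, not_false_iff, Sum.elim_inr]
      exact Fin.ext (by simp; omega)
  right_inv x := by
    rcases x with x | j
    · simp only [Sum.elim_inl, dif_pos]
      exact congrArg Sum.inl (Subsingleton.elim _ _)
    · simp only [Sum.elim_inr]
      simp only [Nat.add_one_ne_zero, ↓reduceDIte]
      exact congrArg Sum.inr (Fin.ext (by simp))

lemma be_symm_inl (hn : 0 < 2*n) (x : Fin 1) : (be hn).symm (Sum.inl x) = ⟨0, hn⟩ := rfl

lemma be_symm_inr (hn : 0 < 2*n) (j : Fin (2*n-1)) :
    (be hn).symm (Sum.inr j) = ⟨j.1+1, by have := j.2; omega⟩ := rfl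

/-- Transport to block form. -/
def TT (hn : 0 < 2*n) (A : Matrix (Fin (2*n)) (Fin (2*n)) S) :
    Matrix (Fin 1 ⊕ Fin (2*n-1)) (Fin 1 ⊕ Fin (2*n-1)) S :=
  A.submatrix (be hn).symm (be hn).symm

lemma TT_mul (hn : 0 < 2*n) (A B : Matrix (Fin (2*n)) (Fin (2*n)) S) :
    TT hn (A * B) = TT hn A * TT hn B :=
  (Matrix.submatrix_mul_equiv A B _ ((be hn).symm) _).symm

lemma TT_one (hn : 0 < 2*n) : TT hn (1 : Matrix (Fin (2*n)) (Fin (2*n)) S) = 1 :=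
  Matrix.submatrix_one_equiv (be hn).symm

lemma TT_transpose (hn : 0 < 2*n) (A : Matrix (Fin (2*n)) (Fin (2*n)) S) :
    TT hn Aᵀ = (TT hn A)ᵀ :=
  (Matrix.transpose_submatrix A _ _).symm

lemma TT_inj (hn : 0 < 2*n) : Function.Injective (TT (S := S) hn) := by
  intro A B h
  ext i j
  rw [← Matrix.ext_iff] at h
  have h2 := h (be hn i) (be hn j)
  simpa [TT, Matrix.submatrix_apply] using h2

/-- Column matrix of a vector. -/
def cl (v : Fin (2*n-1) → S) : Matrix (Fin (2*n-1)) (Fin 1) S :=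
  Matrix.of fun i _ => v i

lemma cl_add (u v : Fin (2*n-1) → S) : cl (u + v) = cl u + cl v := rfl

lemma cl_zero : cl (0 : Fin (2*n-1) → S) = 0 := rfl

lemma two_inv_cancel (h2 : IsUnit (2 : S)) {x : S} (h : x + x = 0) : x = 0 :=
  h2.mul_left_cancel (by rw [two_mul, h, mul_zero])

lemma skew_apply (ψ : Matrix (Fin (2*n)) (Fin (2*n)) S) (hskew : ψᵀ = -ψ) (i j : Fin (2*n)) :
    ψ i j = - ψ j i := by
  have h := congrFun (congrFun hskew j) i
  simp only [Matrix.transpose_apply, Matrix.neg_apply] at h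
  linear_combination h

lemma skew_diag (h2 : IsUnit (2 : S)) (ψ : Matrix (Fin (2*n)) (Fin (2*n)) S)
    (hskew : ψᵀ = -ψ) (i : Fin (2*n)) : ψ i i = 0 := by
  refine two_inv_cancel h2 ?_
  have h := skew_apply ψ hskew i i
  linear_combination h

/-- A `1 × 1` matrix is symmetric. -/
lemma one_by_one_transpose (M : Matrix (Fin 1) (Fin 1) S) : Mᵀ = M := by
  ext i j
  fin_cases i <;> fin_cases j <;> rfl

/-- Block form of `ψ`. -/
lemma TT_psi (hn : 0 < 2*n) (h2 : IsUnit (2 : S)) (ψ : Matrix (Fin (2*n)) (Fin (2*n)) S)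
    (hskew : ψᵀ = -ψ) :
    TT hn ψ = Matrix.fromBlocks 0 (-(cl (cvec ψ))ᵀ) (cl (cvec ψ)) (nuMat ψ) := by
  ext i j
  rcases i with x | i <;> rcases j with y | j <;>
    simp only [TT, Matrix.submatrix_apply, be_symm_inl, be_symm_inr, Matrix.fromBlocks,
      Sum.elim_inl, Sum.elim_inr, Matrix.zero_apply, Matrix.neg_apply, Matrix.transpose_apply]
  · exact skew_diag h2 ψ hskew _
  · rw [skew_apply ψ hskew]
    rfl
  · rfl
  · rfl

/-- Block form of `ψ⁻¹`. -/
lemma TT_psi_inv (hn : 0 < 2*n) (h2 : IsUnit (2 : S)) (ψ : Matrix (Fin (2*n)) (Fin (2*n)) S)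
    (hskew : ψᵀ = -ψ) (hψ : IsUnit ψ) :
    TT hn ψ⁻¹ = Matrix.fromBlocks 0 (cl (dvec ψ))ᵀ (-(cl (dvec ψ))) (muMat ψ) := by
  have hskew' : (ψ⁻¹)ᵀ = -(ψ⁻¹) := by
    rw [Matrix.transpose_nonsing_inv, hskew]
    refine Matrix.inv_eq_right_inv ?_
    rw [Matrix.neg_mul, Matrix.mul_neg, neg_neg,
      Matrix.mul_nonsing_inv _ ((Matrix.isUnit_iff_isUnit_det ψ).mp hψ)]
  ext i j
  rcases i with x | i <;> rcases j with y | j <;>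
    simp only [TT, Matrix.submatrix_apply, be_symm_inl, be_symm_inr, Matrix.fromBlocks,
      Sum.elim_inl, Sum.elim_inr, Matrix.zero_apply, Matrix.neg_apply, Matrix.transpose_apply]
  · exact skew_diag h2 _ hskew' _
  · rfl
  · rw [skew_apply _ hskew']
    rfl
  · rfl

/-- Block form of `Cmat`. -/
lemma TT_Cmat (hn : 0 < 2*n) (ψ : Matrix (Fin (2*n)) (Fin (2*n)) S) (v : Fin (2*n-1) → S) :
    TT hn (Cmat ψ v) = Matrix.fromBlocks 1 0 (cl v) (alphaMat ψ v) := by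
  ext i j
  rcases i with x | i <;> rcases j with y | j <;>
    simp only [TT, Matrix.submatrix_apply, be_symm_inl, be_symm_inr, Matrix.fromBlocks,
      Sum.elim_inl, Sum.elim_inr, Cmat, Matrix.of_apply, Matrix.zero_apply]
  · rw [Subsingleton.elim x y]; simp [Matrix.one_apply]
  · simp
  · simp [cl]
  · simp

/-- Block form of `Rmat`. -/
lemma TT_Rmat (hn : 0 < 2*n) (ψ : Matrix (Fin (2*n)) (Fin (2*n)) S) (v : Fin (2*n-1) → S) :
    TT hn (Rmat ψ v) = Matrix.fromBlocks 1 (cl v)ᵀ 0 (betaMat ψ v) := by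
  ext i j
  rcases i with x | i <;> rcases j with y | j <;>
    simp only [TT, Matrix.submatrix_apply, be_symm_inl, be_symm_inr, Matrix.fromBlocks,
      Sum.elim_inl, Sum.elim_inr, Rmat, Matrix.of_apply, Matrix.zero_apply,
      Matrix.transpose_apply]
  · rw [Subsingleton.elim x y]; simp [Matrix.one_apply]
  · simp [cl]
  · simp
  · simp

/-- `alphaMat` as a matrix product. -/
lemma alphaMat_eq (ψ : Matrix (Fin (2*n)) (Fin (2*n)) S) (v : Fin (2*n-1) → S) :
    alphaMat ψ v = 1 + cl (dvec ψ) * ((cl v)ᵀ * nuMat ψ) := by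
  ext i j
  simp [alphaMat, cl, Matrix.mul_apply, Fin.sum_univ_one, Finset.mul_sum]

/-- `betaMat` as a matrix product. -/
lemma betaMat_eq (ψ : Matrix (Fin (2*n)) (Fin (2*n)) S) (v : Fin (2*n-1) → S) :
    betaMat ψ v = 1 + (muMat ψ * cl v) * (cl (cvec ψ))ᵀ := by
  ext i j
  simp [betaMat, cl, Matrix.mul_apply, Fin.sum_univ_one, Finset.sum_mul]

end Aux
section Rels

variable {S : Type*} [CommRing S] {n : ℕ}

lemma inv_skew_s13 (ψ : Matrix (Fin (2*n)) (Fin (2*n)) S) (hskew : ψᵀ = -ψ) (hψ : IsUnit ψ) :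
    (ψ⁻¹)ᵀ = -(ψ⁻¹) := by
  rw [Matrix.transpose_nonsing_inv, hskew]
  refine Matrix.inv_eq_right_inv ?_
  rw [Matrix.neg_mul, Matrix.mul_neg, neg_neg,
    Matrix.mul_nonsing_inv _ ((Matrix.isUnit_iff_isUnit_det ψ).mp hψ)]

/-- Multiplying by a `1×1` matrix on the right is scalar multiplication. -/
lemma mul_one_by_one {k : Type*} (X : Matrix k (Fin 1) S) (M : Matrix (Fin 1) (Fin 1) S) :
    X * M = M 0 0 • X := by
  ext i j
  rw [Subsingleton.elim j 0]
  simp [Matrix.mul_apply, Fin.sum_univ_one, mul_comm]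

lemma rel_fwd (hn : 0 < 2*n) (h2 : IsUnit (2 : S)) (ψ : Matrix (Fin (2*n)) (Fin (2*n)) S)
    (hskew : ψᵀ = -ψ) (hψ : IsUnit ψ) :
    (cl (cvec ψ))ᵀ * cl (dvec ψ) = 1 ∧ (cl (cvec ψ))ᵀ * muMat ψ = 0 ∧
      nuMat ψ * cl (dvec ψ) = 0 ∧ cl (cvec ψ) * (cl (dvec ψ))ᵀ + nuMat ψ * muMat ψ = 1 := by
  have h : TT hn ψ * TT hn ψ⁻¹ = 1 := by
    rw [← TT_mul, Matrix.mul_nonsing_inv _ ((Matrix.isUnit_iff_isUnit_det ψ).mp hψ), TT_one]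
  rw [TT_psi hn h2 ψ hskew, TT_psi_inv hn h2 ψ hskew hψ, Matrix.fromBlocks_multiply,
    ← Matrix.fromBlocks_one, Matrix.fromBlocks_inj] at h
  simp only [Matrix.zero_mul, Matrix.mul_zero, zero_add, add_zero, Matrix.neg_mul,
    Matrix.mul_neg, neg_neg, neg_zero, neg_eq_zero] at h
  exact ⟨h.1, h.2.1, h.2.2.1, h.2.2.2⟩

lemma rel_bwd (hn : 0 < 2*n) (h2 : IsUnit (2 : S)) (ψ : Matrix (Fin (2*n)) (Fin (2*n)) S)
    (hskew : ψᵀ = -ψ) (hψ : IsUnit ψ) :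
    (cl (dvec ψ))ᵀ * cl (cvec ψ) = 1 ∧ (cl (dvec ψ))ᵀ * nuMat ψ = 0 ∧
      muMat ψ * cl (cvec ψ) = 0 ∧ cl (dvec ψ) * (cl (cvec ψ))ᵀ + muMat ψ * nuMat ψ = 1 := by
  have h : TT hn ψ⁻¹ * TT hn ψ = 1 := by
    rw [← TT_mul, Matrix.nonsing_inv_mul _ ((Matrix.isUnit_iff_isUnit_det ψ).mp hψ), TT_one]
  rw [TT_psi hn h2 ψ hskew, TT_psi_inv hn h2 ψ hskew hψ, Matrix.fromBlocks_multiply,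
    ← Matrix.fromBlocks_one, Matrix.fromBlocks_inj] at h
  simp only [Matrix.zero_mul, Matrix.mul_zero, zero_add, add_zero, Matrix.neg_mul,
    Matrix.mul_neg, neg_neg, neg_zero, neg_eq_zero] at h
  exact ⟨h.1, h.2.1, h.2.2.1, h.2.2.2⟩

lemma nu_skew_s13 (ψ : Matrix (Fin (2*n)) (Fin (2*n)) S) (hskew : ψᵀ = -ψ) :
    (nuMat ψ)ᵀ = -(nuMat ψ) := by
  ext i j
  simp only [nuMat, Matrix.transpose_apply, Matrix.neg_apply, Matrix.of_apply]
  exact skew_apply ψ hskew _ _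

lemma mu_skew_s13 (ψ : Matrix (Fin (2*n)) (Fin (2*n)) S) (hskew : ψᵀ = -ψ) (hψ : IsUnit ψ) :
    (muMat ψ)ᵀ = -(muMat ψ) := by
  ext i j
  simp only [muMat, Matrix.transpose_apply, Matrix.neg_apply, Matrix.of_apply]
  exact skew_apply _ (inv_skew_s13 ψ hskew hψ) _ _

/-- `uᵀ N u = 0` for skew `N`. -/
lemma quad_zero (h2 : IsUnit (2 : S)) (N : Matrix (Fin (2*n-1)) (Fin (2*n-1)) S) (hN : Nᵀ = -N)
    (u : Fin (2*n-1) → S) : (cl u)ᵀ * N * cl u = 0 := by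
  have hT : ((cl u)ᵀ * N * cl u)ᵀ = -((cl u)ᵀ * N * cl u) := by
    simp [Matrix.transpose_mul, Matrix.transpose_transpose, hN, Matrix.mul_assoc,
      Matrix.neg_mul, Matrix.mul_neg]
  rw [one_by_one_transpose] at hT
  ext i j
  refine two_inv_cancel h2 ?_
  have h := congrFun (congrFun hT i) j
  simp only [Matrix.neg_apply, Matrix.zero_apply] at h ⊢
  linear_combination h

end Rels
section Laws

variable {S : Type*} [CommRing S] {n : ℕ}

lemma chain0 {a b c d : Type*} [Fintype b] [Fintype c] (X : Matrix a b S) (Y : Matrix b c S)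
    (h : X * Y = 0) (Z : Matrix c d S) : X * (Y * Z) = 0 := by
  rw [← Matrix.mul_assoc, h, Matrix.zero_mul]

lemma chain1 {a b d : Type*} [Fintype b] [Fintype a] [DecidableEq a] (X : Matrix a b S)
    (Y : Matrix b a S) (h : X * Y = 1) (Z : Matrix a d S) : X * (Y * Z) = Z := by
  rw [← Matrix.mul_assoc, h, Matrix.one_mul]

/-- Multiplying by a `1×1` matrix on the left is scalar multiplication. -/
lemma one_by_one_mul {k : Type*} (M : Matrix (Fin 1) (Fin 1) S) (Y : Matrix (Fin 1) k S) :
    M * Y = M 0 0 • Y := by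
  ext i j
  rw [Subsingleton.elim i 0]
  simp [Matrix.mul_apply, Fin.sum_univ_one]

/-- The cocycle scalar for the `C`-generators. -/
noncomputable def cmix (ψ : Matrix (Fin (2*n)) (Fin (2*n)) S) (u w : Fin (2*n-1) → S) : S :=
  ((cl u)ᵀ * (nuMat ψ * cl w)) 0 0

/-- The cocycle scalar for the `R`-generators. -/
noncomputable def rmix (ψ : Matrix (Fin (2*n)) (Fin (2*n)) S) (u w : Fin (2*n-1) → S) : S :=
  ((cl u)ᵀ * (muMat ψ * cl w)) 0 0

/-- The composition of two `C`-generator parameters. -/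
noncomputable def cadd (ψ : Matrix (Fin (2*n)) (Fin (2*n)) S) (u w : Fin (2*n-1) → S) :
    Fin (2*n-1) → S := fun i => u i + w i + cmix ψ u w * dvec ψ i

/-- The composition of two `R`-generator parameters. -/
noncomputable def radd (ψ : Matrix (Fin (2*n)) (Fin (2*n)) S) (u w : Fin (2*n-1) → S) :
    Fin (2*n-1) → S := fun i => u i + w i + rmix ψ u w * cvec ψ i

lemma cl_cadd (ψ : Matrix (Fin (2*n)) (Fin (2*n)) S) (u w : Fin (2*n-1) → S) :
    cl (cadd ψ u w) = cl u + cl w + cmix ψ u w • cl (dvec ψ) := by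
  ext i j; simp [cl, cadd]

lemma cl_radd (ψ : Matrix (Fin (2*n)) (Fin (2*n)) S) (u w : Fin (2*n-1) → S) :
    cl (radd ψ u w) = cl u + cl w + rmix ψ u w • cl (cvec ψ) := by
  ext i j; simp [cl, radd]

lemma cl_neg (u : Fin (2*n-1) → S) : cl (-u) = -(cl u) := by
  ext i j; simp [cl]

/-- Multiplication law for the `C`-generators. -/
lemma Cmat_mul (hn : 0 < 2*n) (h2 : IsUnit (2 : S)) (ψ : Matrix (Fin (2*n)) (Fin (2*n)) S)
    (hskew : ψᵀ = -ψ) (hψ : IsUnit ψ) (u w : Fin (2*n-1) → S) :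
    Cmat ψ u * Cmat ψ w = Cmat ψ (cadd ψ u w) := by
  obtain ⟨E1, E2, E3, E4⟩ := rel_fwd hn h2 ψ hskew hψ
  obtain ⟨E5, E6, E7, E8⟩ := rel_bwd hn h2 ψ hskew hψ
  apply TT_inj hn
  rw [TT_mul, TT_Cmat, TT_Cmat, TT_Cmat, Matrix.fromBlocks_multiply]
  rw [Matrix.fromBlocks_inj]
  refine ⟨by simp, by simp, ?_, ?_⟩
  · rw [alphaMat_eq, cl_cadd, Matrix.mul_one, Matrix.add_mul, Matrix.one_mul,
      Matrix.mul_assoc, Matrix.mul_assoc, mul_one_by_one, ← add_assoc]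
    simp only [cmix]
  · have h1 : ((cl u)ᵀ * nuMat ψ) * (cl (dvec ψ) * ((cl w)ᵀ * nuMat ψ)) = 0 := by
      rw [← Matrix.mul_assoc, Matrix.mul_assoc (cl u)ᵀ (nuMat ψ) (cl (dvec ψ)), E3,
        Matrix.mul_zero, Matrix.zero_mul]
    have hcross : (cl (dvec ψ) * ((cl u)ᵀ * nuMat ψ)) *
        (cl (dvec ψ) * ((cl w)ᵀ * nuMat ψ)) = 0 := by
      rw [Matrix.mul_assoc, h1, Matrix.mul_zero]
    rw [alphaMat_eq, alphaMat_eq, alphaMat_eq, cl_cadd]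
    simp only [Matrix.mul_zero, zero_add, Matrix.transpose_add, Matrix.transpose_smul,
      Matrix.add_mul, Matrix.smul_mul, E6, smul_zero, add_zero, Matrix.mul_add,
      Matrix.mul_one, Matrix.one_mul, hcross]
    abel

/-- Multiplication law for the `R`-generators. -/
lemma Rmat_mul (hn : 0 < 2*n) (h2 : IsUnit (2 : S)) (ψ : Matrix (Fin (2*n)) (Fin (2*n)) S)
    (hskew : ψᵀ = -ψ) (hψ : IsUnit ψ) (u w : Fin (2*n-1) → S) :
    Rmat ψ u * Rmat ψ w = Rmat ψ (radd ψ u w) := by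
  obtain ⟨E1, E2, E3, E4⟩ := rel_fwd hn h2 ψ hskew hψ
  obtain ⟨E5, E6, E7, E8⟩ := rel_bwd hn h2 ψ hskew hψ
  apply TT_inj hn
  rw [TT_mul, TT_Rmat, TT_Rmat, TT_Rmat, Matrix.fromBlocks_multiply]
  rw [Matrix.fromBlocks_inj]
  refine ⟨by simp, ?_, by simp, ?_⟩
  · rw [betaMat_eq, cl_radd, Matrix.one_mul, Matrix.mul_add, Matrix.mul_one,
      ← Matrix.mul_assoc (cl u)ᵀ (muMat ψ * cl w) (cl (cvec ψ))ᵀ, one_by_one_mul]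
    simp only [Matrix.transpose_add, Matrix.transpose_smul, rmix]
    abel
  · have h1 : (cl (cvec ψ))ᵀ * ((muMat ψ * cl w) * (cl (cvec ψ))ᵀ) = 0 := by
      rw [← Matrix.mul_assoc, chain0 (cl (cvec ψ))ᵀ (muMat ψ) E2 (cl w), Matrix.zero_mul]
    have hcross : ((muMat ψ * cl u) * (cl (cvec ψ))ᵀ) *
        ((muMat ψ * cl w) * (cl (cvec ψ))ᵀ) = 0 := by
      rw [Matrix.mul_assoc, h1, Matrix.mul_zero]
    rw [betaMat_eq, betaMat_eq, betaMat_eq, cl_radd]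
    simp only [Matrix.zero_mul, zero_add, Matrix.mul_add, Matrix.mul_smul, E7, smul_zero,
      add_zero, Matrix.add_mul, Matrix.smul_mul, Matrix.mul_one, Matrix.one_mul, hcross]
    abel

lemma Cmat_zero (hn : 0 < 2*n) (ψ : Matrix (Fin (2*n)) (Fin (2*n)) S) :
    Cmat ψ (0 : Fin (2*n-1) → S) = 1 := by
  apply TT_inj hn
  rw [TT_Cmat, TT_one, alphaMat_eq, cl_zero, Matrix.transpose_zero, Matrix.zero_mul,
    Matrix.mul_zero, add_zero, Matrix.fromBlocks_one]

lemma Rmat_zero (hn : 0 < 2*n) (ψ : Matrix (Fin (2*n)) (Fin (2*n)) S) :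
    Rmat ψ (0 : Fin (2*n-1) → S) = 1 := by
  apply TT_inj hn
  rw [TT_Rmat, TT_one, betaMat_eq, cl_zero, Matrix.transpose_zero, Matrix.mul_zero,
    Matrix.zero_mul, add_zero, Matrix.fromBlocks_one]

lemma cmix_neg_self (h2 : IsUnit (2 : S)) (ψ : Matrix (Fin (2*n)) (Fin (2*n)) S)
    (hskew : ψᵀ = -ψ) (u : Fin (2*n-1) → S) : cmix ψ u (-u) = 0 := by
  have hq := quad_zero h2 (nuMat ψ) (nu_skew_s13 ψ hskew) u
  rw [Matrix.mul_assoc] at hq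
  simp only [cmix, cl_neg, Matrix.mul_neg, hq, neg_zero, Matrix.zero_apply]

lemma rmix_neg_self (h2 : IsUnit (2 : S)) (ψ : Matrix (Fin (2*n)) (Fin (2*n)) S)
    (hskew : ψᵀ = -ψ) (hψ : IsUnit ψ) (u : Fin (2*n-1) → S) : rmix ψ u (-u) = 0 := by
  have hq := quad_zero h2 (muMat ψ) (mu_skew_s13 ψ hskew hψ) u
  rw [Matrix.mul_assoc] at hq
  simp only [rmix, cl_neg, Matrix.mul_neg, hq, neg_zero, Matrix.zero_apply]

lemma cadd_neg (h2 : IsUnit (2 : S)) (ψ : Matrix (Fin (2*n)) (Fin (2*n)) S)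
    (hskew : ψᵀ = -ψ) (u : Fin (2*n-1) → S) : cadd ψ u (-u) = 0 := by
  funext i
  simp [cadd, cmix_neg_self h2 ψ hskew u]

lemma radd_neg (h2 : IsUnit (2 : S)) (ψ : Matrix (Fin (2*n)) (Fin (2*n)) S)
    (hskew : ψᵀ = -ψ) (hψ : IsUnit ψ) (u : Fin (2*n-1) → S) : radd ψ u (-u) = 0 := by
  funext i
  simp [radd, rmix_neg_self h2 ψ hskew hψ u]

lemma Cmat_mul_neg (hn : 0 < 2*n) (h2 : IsUnit (2 : S)) (ψ : Matrix (Fin (2*n)) (Fin (2*n)) S)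
    (hskew : ψᵀ = -ψ) (hψ : IsUnit ψ) (u : Fin (2*n-1) → S) :
    Cmat ψ u * Cmat ψ (-u) = 1 := by
  rw [Cmat_mul hn h2 ψ hskew hψ, cadd_neg h2 ψ hskew, Cmat_zero hn]

lemma Rmat_mul_neg (hn : 0 < 2*n) (h2 : IsUnit (2 : S)) (ψ : Matrix (Fin (2*n)) (Fin (2*n)) S)
    (hskew : ψᵀ = -ψ) (hψ : IsUnit ψ) (u : Fin (2*n-1) → S) :
    Rmat ψ u * Rmat ψ (-u) = 1 := by
  rw [Rmat_mul hn h2 ψ hskew hψ, radd_neg h2 ψ hskew hψ, Rmat_zero hn]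

end Laws
section Sp

variable {S : Type*} [CommRing S] {n : ℕ}

lemma chain0₃ {a b c d e : Type*} [Fintype b] [Fintype c] [Fintype d]
    (X : Matrix a b S) (Y : Matrix b c S) (W : Matrix c d S)
    (h : X * Y * W = 0) (Z : Matrix d e S) : X * (Y * (W * Z)) = 0 := by
  rw [← Matrix.mul_assoc X Y (W * Z), ← Matrix.mul_assoc (X*Y) W Z, h, Matrix.zero_mul]

lemma chainE {a b c d : Type*} [Fintype b] [Fintype c] [Fintype a] [DecidableEq a]
    (X : Matrix a b S) (Y : Matrix b a S) (P : Matrix a c S) (Q : Matrix c a S)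
    (h : X * Y = 1 - P * Q) (Z : Matrix a d S) :
    X * (Y * Z) = Z - P * (Q * Z) := by
  rw [← Matrix.mul_assoc, h, Matrix.sub_mul, Matrix.one_mul, Matrix.mul_assoc]

lemma sym0 (u w : Fin (2*n-1) → S) : (cl u)ᵀ * cl w = (cl w)ᵀ * cl u := by
  rw [← one_by_one_transpose ((cl w)ᵀ * cl u), Matrix.transpose_mul, Matrix.transpose_transpose]

lemma sym_mid {k : Type*} (u w : Fin (2*n-1) → S) (Z : Matrix (Fin 1) k S) :
    (cl u)ᵀ * (cl w * Z) = (cl w)ᵀ * (cl u * Z) := by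
  rw [← Matrix.mul_assoc, ← Matrix.mul_assoc, sym0]

lemma Cmat_sp (hn : 0 < 2*n) (h2 : IsUnit (2 : S)) (ψ : Matrix (Fin (2*n)) (Fin (2*n)) S)
    (hskew : ψᵀ = -ψ) (hψ : IsUnit ψ) (v : Fin (2*n-1) → S) :
    (Cmat ψ v)ᵀ * ψ * Cmat ψ v = ψ := by
  obtain ⟨E1, E2, E3, E4⟩ := rel_fwd hn h2 ψ hskew hψ
  obtain ⟨E5, E6, E7, E8⟩ := rel_bwd hn h2 ψ hskew hψ
  have NT := nu_skew_s13 ψ hskew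
  have K1 : ∀ {d : Type} (Z : Matrix (Fin 1) d S),
      (cl (cvec ψ))ᵀ * (cl (dvec ψ) * Z) = Z := fun Z => chain1 _ _ E1 Z
  have K3 : ∀ {d : Type} (Z : Matrix (Fin 1) d S),
      nuMat ψ * (cl (dvec ψ) * Z) = 0 := fun Z => chain0 _ _ E3 Z
  have K5 : ∀ {d : Type} (Z : Matrix (Fin 1) d S),
      (cl (dvec ψ))ᵀ * (cl (cvec ψ) * Z) = Z := fun Z => chain1 _ _ E5 Z
  have K6 : ∀ {d : Type} (Z : Matrix (Fin (2*n-1)) d S),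
      (cl (dvec ψ))ᵀ * (nuMat ψ * Z) = 0 := fun Z => chain0 _ _ E6 Z
  have hq := quad_zero h2 (nuMat ψ) NT v
  apply TT_inj hn
  rw [TT_mul, TT_mul, TT_transpose, TT_Cmat, TT_psi hn h2 ψ hskew, alphaMat_eq,
    Matrix.fromBlocks_transpose, Matrix.transpose_one, Matrix.transpose_zero,
    Matrix.fromBlocks_multiply, Matrix.fromBlocks_multiply, Matrix.fromBlocks_inj]
  refine ⟨?_, ?_, ?_, ?_⟩
  · simp only [Matrix.mul_zero, Matrix.one_mul, Matrix.mul_one, zero_add, add_zero,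
      Matrix.add_mul, Matrix.neg_mul, hq, sym0 (cvec ψ) v]
    abel
  · simp only [Matrix.mul_zero, Matrix.one_mul, Matrix.mul_one, zero_add, add_zero,
      Matrix.zero_mul, Matrix.add_mul, Matrix.mul_add, Matrix.neg_mul, Matrix.mul_assoc,
      K1, K3, Matrix.mul_zero, add_zero]
    abel
  · simp only [Matrix.transpose_add, Matrix.transpose_one, Matrix.transpose_mul,
      Matrix.transpose_transpose, NT, Matrix.mul_zero, Matrix.one_mul, Matrix.mul_one,
      zero_add, add_zero, Matrix.zero_mul, Matrix.add_mul, Matrix.mul_add, Matrix.neg_mul,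
      Matrix.mul_neg, Matrix.mul_assoc, E5, E6, K5, K6, Matrix.mul_zero, Matrix.mul_one]
    abel
  · simp only [Matrix.transpose_add, Matrix.transpose_one, Matrix.transpose_mul,
      Matrix.transpose_transpose, NT, Matrix.mul_zero, Matrix.one_mul, Matrix.mul_one,
      zero_add, add_zero, Matrix.zero_mul, Matrix.add_mul, Matrix.mul_add, Matrix.neg_mul,
      Matrix.mul_neg, Matrix.mul_assoc, E5, E6, K5, K6, K1, K3, Matrix.mul_zero,
      Matrix.mul_one, neg_zero]

end Sp
section Sp2

variable {S : Type*} [CommRing S] {n : ℕ}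

lemma Rmat_sp (hn : 0 < 2*n) (h2 : IsUnit (2 : S)) (ψ : Matrix (Fin (2*n)) (Fin (2*n)) S)
    (hskew : ψᵀ = -ψ) (hψ : IsUnit ψ) (v : Fin (2*n-1) → S) :
    (Rmat ψ v)ᵀ * ψ * Rmat ψ v = ψ := by
  obtain ⟨E1, E2, E3, E4⟩ := rel_fwd hn h2 ψ hskew hψ
  obtain ⟨E5, E6, E7, E8⟩ := rel_bwd hn h2 ψ hskew hψ
  have MT := mu_skew_s13 ψ hskew hψ
  have K2 : ∀ {d : Type} (Z : Matrix (Fin (2*n-1)) d S),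
      (cl (cvec ψ))ᵀ * (muMat ψ * Z) = 0 := fun Z => chain0 _ _ E2 Z
  have K7 : ∀ {d : Type} (Z : Matrix (Fin 1) d S),
      muMat ψ * (cl (cvec ψ) * Z) = 0 := fun Z => chain0 _ _ E7 Z
  have K4 : ∀ {d : Type} (Z : Matrix (Fin (2*n-1)) d S),
      nuMat ψ * (muMat ψ * Z) = Z - cl (cvec ψ) * ((cl (dvec ψ))ᵀ * Z) :=
    fun Z => chainE _ _ _ _ (eq_sub_of_add_eq' E4) Z
  have K8 : ∀ {d : Type} (Z : Matrix (Fin (2*n-1)) d S),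
      muMat ψ * (nuMat ψ * Z) = Z - cl (dvec ψ) * ((cl (cvec ψ))ᵀ * Z) :=
    fun Z => chainE _ _ _ _ (eq_sub_of_add_eq' E8) Z
  have hqm := quad_zero h2 (muMat ψ) MT v
  have KQM : ∀ {d : Type} (Z : Matrix (Fin 1) d S),
      (cl v)ᵀ * (muMat ψ * (cl v * Z)) = 0 := fun Z => chain0₃ _ _ _ hqm Z
  have hqm' : (cl v)ᵀ * (muMat ψ * cl v) = 0 := by rw [← Matrix.mul_assoc]; exact hqm
  have E8' : muMat ψ * nuMat ψ = 1 - cl (dvec ψ) * (cl (cvec ψ))ᵀ := eq_sub_of_add_eq' E8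
  apply TT_inj hn
  rw [TT_mul, TT_mul, TT_transpose, TT_Rmat, TT_psi hn h2 ψ hskew, betaMat_eq,
    Matrix.fromBlocks_transpose, Matrix.transpose_one, Matrix.transpose_zero,
    Matrix.fromBlocks_multiply, Matrix.fromBlocks_multiply, Matrix.fromBlocks_inj]
  refine ⟨?_, ?_, ?_, ?_⟩
  · simp
  · simp only [Matrix.transpose_add, Matrix.transpose_one, Matrix.transpose_mul,
      Matrix.transpose_transpose, MT, Matrix.mul_zero, Matrix.one_mul, Matrix.mul_one,
      zero_add, add_zero, Matrix.zero_mul, Matrix.add_mul, Matrix.mul_add, Matrix.neg_mul,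
      Matrix.mul_neg, Matrix.mul_assoc, K2, K7, E2, E7, Matrix.mul_zero, neg_zero]
  · simp only [Matrix.transpose_add, Matrix.transpose_one, Matrix.transpose_mul,
      Matrix.transpose_transpose, MT, Matrix.mul_zero, Matrix.one_mul, Matrix.mul_one,
      zero_add, add_zero, Matrix.zero_mul, Matrix.add_mul, Matrix.mul_add, Matrix.neg_mul,
      Matrix.mul_neg, Matrix.mul_assoc, K2, K7, E2, E7, Matrix.mul_zero, neg_zero]
  · simp only [Matrix.transpose_add, Matrix.transpose_one, Matrix.transpose_mul,
      Matrix.transpose_transpose, MT, Matrix.mul_zero, Matrix.one_mul, Matrix.mul_one,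
      zero_add, add_zero, Matrix.zero_mul, Matrix.add_mul, Matrix.mul_add, Matrix.neg_mul,
      Matrix.mul_neg, Matrix.mul_assoc, K2, K7, K4, K8, KQM, hqm', E2, E7, E5, E6, E8',
      Matrix.mul_zero, Matrix.mul_one, neg_zero, sub_zero, Matrix.mul_sub, Matrix.sub_mul]
    rw [sym_mid v (dvec ψ) ((cl (cvec ψ))ᵀ)]
    abel

end Sp2
section Map

variable {S S' : Type*} [CommRing S] [CommRing S'] {n : ℕ}

lemma map_isUnit (f : S →+* S') {m : ℕ} (ψ : Matrix (Fin m) (Fin m) S) (hψ : IsUnit ψ) :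
    IsUnit (ψ.map f) := by
  rw [Matrix.isUnit_iff_isUnit_det]
  have hd : (ψ.map f).det = f ψ.det := by
    rw [← RingHom.mapMatrix_apply, ← RingHom.map_det]
  rw [hd]
  exact (((Matrix.isUnit_iff_isUnit_det ψ).mp hψ).map f)

lemma map_nonsing_inv (f : S →+* S') {m : ℕ} (ψ : Matrix (Fin m) (Fin m) S) (hψ : IsUnit ψ) :
    (ψ.map f)⁻¹ = ψ⁻¹.map f :=
  Matrix.inv_eq_right_inv (by
    rw [← Matrix.map_mul, Matrix.mul_nonsing_inv _ ((Matrix.isUnit_iff_isUnit_det ψ).mp hψ),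
      Matrix.map_one _ f.map_zero f.map_one])

variable (f : S →+* S') (ψ : Matrix (Fin (2*n)) (Fin (2*n)) S)

lemma cvec_map : cvec (ψ.map f) = fun i => f (cvec ψ i) := rfl

lemma nuMat_map : nuMat (ψ.map f) = (nuMat ψ).map f := rfl

lemma cl_map (v : Fin (2*n-1) → S) : cl (fun i => f (v i)) = (cl v).map f := rfl

lemma dvec_map (hψ : IsUnit ψ) : dvec (ψ.map f) = fun i => f (dvec ψ i) := by
  funext i
  simp only [dvec, map_nonsing_inv f ψ hψ, Matrix.map_apply]

lemma muMat_map (hψ : IsUnit ψ) : muMat (ψ.map f) = (muMat ψ).map f := by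
  ext i j
  simp only [muMat, map_nonsing_inv f ψ hψ, Matrix.map_apply, Matrix.of_apply]

lemma alphaMat_map (hψ : IsUnit ψ) (v : Fin (2*n-1) → S) :
    alphaMat (ψ.map f) (fun i => f (v i)) = (alphaMat ψ v).map f := by
  ext i j
  simp only [alphaMat, dvec_map f ψ hψ, nuMat_map, Matrix.map_apply, Matrix.of_apply,
    Matrix.add_apply, Matrix.one_apply, _root_.map_add, _root_.map_mul, map_sum, apply_ite f, _root_.map_one,
    _root_.map_zero]

lemma betaMat_map (hψ : IsUnit ψ) (v : Fin (2*n-1) → S) :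
    betaMat (ψ.map f) (fun i => f (v i)) = (betaMat ψ v).map f := by
  ext i j
  simp only [betaMat, muMat_map f ψ hψ, cvec_map, Matrix.map_apply, Matrix.of_apply,
    Matrix.add_apply, Matrix.one_apply, _root_.map_add, _root_.map_mul, map_sum, apply_ite f, _root_.map_one,
    _root_.map_zero]

lemma Cmat_map (hψ : IsUnit ψ) (v : Fin (2*n-1) → S) :
    Cmat (ψ.map f) (fun i => f (v i)) = (Cmat ψ v).map f := by
  have ha := alphaMat_map f ψ hψ v
  ext i j
  simp only [Cmat, Matrix.map_apply, Matrix.of_apply]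
  split_ifs with h1 h2
  · exact (_root_.map_one f).symm
  · exact (_root_.map_zero f).symm
  · rfl
  · exact congrFun (congrFun ha _) _

lemma Rmat_map (hψ : IsUnit ψ) (v : Fin (2*n-1) → S) :
    Rmat (ψ.map f) (fun i => f (v i)) = (Rmat ψ v).map f := by
  have hb := betaMat_map f ψ hψ v
  ext i j
  simp only [Rmat, Matrix.map_apply, Matrix.of_apply]
  split_ifs with h1 h2
  · exact (_root_.map_one f).symm
  · rfl
  · exact (_root_.map_zero f).symm
  · exact congrFun (congrFun hb _) _

lemma cmix_map (hψ : IsUnit ψ) (u w : Fin (2*n-1) → S) :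
    cmix (ψ.map f) (fun i => f (u i)) (fun i => f (w i)) = f (cmix ψ u w) := by
  simp only [cmix, cl_map, nuMat_map, ← Matrix.transpose_map, ← Matrix.map_mul,
    Matrix.map_apply]

lemma rmix_map (hψ : IsUnit ψ) (u w : Fin (2*n-1) → S) :
    rmix (ψ.map f) (fun i => f (u i)) (fun i => f (w i)) = f (rmix ψ u w) := by
  simp only [rmix, cl_map, muMat_map f ψ hψ, ← Matrix.transpose_map, ← Matrix.map_mul,
    Matrix.map_apply]

end Map
/-- for `R = 2R` and `φ` invertible skew-symmetric of size `2n`,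
`ESp_{φ⊗R[X]}(R[X],(X)) = ESp_{φ⊗R[X]}(R[X]) ∩ Sp_{φ⊗R[X]}(R[X],(X))`. -/
theorem resp_poly_X_eq_esp_inter_sprel {R : Type*} [CommRing R]
    (h2 : IsUnit (2 : R)) (n : ℕ)
    (φ : Matrix (Fin (2*n)) (Fin (2*n)) R) (hskew : φᵀ = -φ) (hinv : IsUnit φ) :
    REsp (φ.map (Polynomial.C : R →+* Polynomial R))
        (Ideal.span {(Polynomial.X : Polynomial R)}) =
      Esp (φ.map (Polynomial.C : R →+* Polynomial R)) ⊓
        SpRel (φ.map (Polynomial.C : R →+* Polynomial R))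
          (Ideal.span {(Polynomial.X : Polynomial R)}) := by
  rcases Nat.eq_zero_or_pos n with hn0 | hnpos
  · subst hn0
    ext g
    have hg1 : g = 1 := Units.ext (by ext i j; exact i.elim0)
    rw [hg1]
    exact iff_of_true (one_mem _) (one_mem _)
  have hn : 0 < 2*n := by omega
  set I : Ideal (Polynomial R) := Ideal.span {(Polynomial.X : Polynomial R)} with hIdef
  set ψ : Matrix (Fin (2*n)) (Fin (2*n)) (Polynomial R) := φ.map (Polynomial.C : R →+* Polynomial R) with hψdef
  have hψs : ψᵀ = -ψ := by
    rw [hψdef, ← Matrix.transpose_map, hskew]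
    refine Matrix.ext fun i j => ?_
    simp [Matrix.map_apply, map_neg]
  have hψu : IsUnit ψ := map_isUnit _ φ hinv
  have h2P : IsUnit (2 : Polynomial R) := by
    have h := h2.map (Polynomial.C : R →+* Polynomial R)
    rwa [map_ofNat] at h
  set ε : Polynomial R →+* Polynomial R := (Polynomial.C : R →+* Polynomial R).comp (Polynomial.evalRingHom 0) with hεdef
  have hεC : ∀ r : R, ε (Polynomial.C r) = Polynomial.C r := fun r => by
    simp [hεdef, Polynomial.coe_evalRingHom]
  have hεidem : ∀ p : Polynomial R, ε (ε p) = ε p := fun p => by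
    simp [hεdef, Polynomial.coe_evalRingHom]
  have hker : ∀ p : Polynomial R, ε p = 0 ↔ p ∈ I := by
    intro p
    rw [hIdef, Ideal.mem_span_singleton, Polynomial.X_dvd_iff,
      Polynomial.coeff_zero_eq_eval_zero]
    simp [hεdef, Polynomial.coe_evalRingHom, Polynomial.C_eq_zero]
  have hεψ : ψ.map ε = ψ := by
    rw [hψdef]
    refine Matrix.ext fun i j => ?_
    simp only [Matrix.map_apply]
    exact hεC _
  -- basic membership lemmas
  have hSpMem : ∀ h : (Matrix (Fin (2*n)) (Fin (2*n)) (Polynomial R))ˣ,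
      ((h.val)ᵀ * ψ * h.val = ψ) → h ∈ Sp ψ := fun h hh => hh
  have inv_val : ∀ (g : (Matrix (Fin (2*n)) (Fin (2*n)) (Polynomial R))ˣ)
      (M : Matrix (Fin (2*n)) (Fin (2*n)) (Polynomial R)), g.val * M = 1 →
      (g⁻¹).val = M := by
    intro g M h
    calc (g⁻¹).val = (g⁻¹).val * (g.val * M) := by
          rw [h, mul_one]
    _ = ((g⁻¹).val * g.val) * M := by rw [mul_assoc]
    _ = M := by rw [← Units.val_mul, inv_mul_cancel, Units.val_one, one_mul]
  -- subgroup inclusions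
  have hIdealEsp : EspIdeal ψ I ≤ Esp ψ := by
    apply Subgroup.closure_mono
    rintro g ⟨v, _, h⟩
    exact ⟨v, h⟩
  have hIdealLe : EspIdeal ψ I ≤ REsp ψ I := by
    rw [EspIdeal, Subgroup.closure_le]
    intro x hx
    refine Subgroup.subset_closure ⟨1, one_mem _, x, Subgroup.subset_closure hx, by group⟩
  have hconj : ∀ e ∈ Esp ψ, ∀ x ∈ REsp ψ I, e * x * e⁻¹ ∈ REsp ψ I := by
    intro e he x hx
    refine Subgroup.closure_induction
      (p := fun x _ => e * x * e⁻¹ ∈ REsp ψ I) ?_ ?_ ?_ ?_ hx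
    · rintro y ⟨e', he', z, hz, rfl⟩
      have h : e * (e' * z * e'⁻¹) * e⁻¹ = (e*e') * z * (e*e')⁻¹ := by group
      rw [h]
      exact Subgroup.subset_closure ⟨e*e', mul_mem he he', z, hz, rfl⟩
    · simpa using one_mem _
    · intro x y _ _ px py
      have h : e * (x*y) * e⁻¹ = (e*x*e⁻¹)*(e*y*e⁻¹) := by group
      rw [h]
      exact mul_mem px py
    · intro x _ px
      have h : e * x⁻¹ * e⁻¹ = (e*x*e⁻¹)⁻¹ := by group
      rw [h]
      exact inv_mem px
  have hEspSp : Esp ψ ≤ Sp ψ := by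
    rw [Esp, Subgroup.closure_le]
    rintro g ⟨v, hg | hg⟩ <;> apply hSpMem <;> rw [hg]
    · exact Cmat_sp hn h2P ψ hψs hψu v
    · exact Rmat_sp hn h2P ψ hψs hψu v
  have hIdealKer : EspIdeal ψ I ≤ congrKer (Polynomial R) (2*n) I := by
    rw [EspIdeal, Subgroup.closure_le]
    rintro g ⟨v, hvI, hg | hg⟩ <;>
      · refine MonoidHom.mem_ker.mpr (Units.ext ?_)
        show (RingHom.mapMatrix (Ideal.Quotient.mk I))
            (↑g : Matrix (Fin (2*n)) (Fin (2*n)) (Polynomial R)) = 1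
        have hv0 : (fun i => (Ideal.Quotient.mk I) (v i)) = (0 : Fin (2*n-1) → Polynomial R ⧸ I) :=
          funext fun i => Ideal.Quotient.eq_zero_iff_mem.mpr (hvI i)
        rw [RingHom.mapMatrix_apply, hg]
        first
        | rw [← Cmat_map _ ψ hψu v, hv0, Cmat_zero hn]
        | rw [← Rmat_map _ ψ hψu v, hv0, Rmat_zero hn]
  -- forward inclusion
  have hle1 : REsp ψ I ≤ Esp ψ ⊓ SpRel ψ I := by
    rw [REsp, Subgroup.closure_le]
    rintro g ⟨e, he, x, hx, rfl⟩
    have hxE : x ∈ Esp ψ := hIdealEsp hx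
    refine Subgroup.mem_inf.mpr ⟨mul_mem (mul_mem he hxE) (inv_mem he), ?_⟩
    refine Subgroup.mem_inf.mpr ⟨mul_mem (mul_mem (hEspSp he) (hEspSp hxE))
      (inv_mem (hEspSp he)), ?_⟩
    have hxK := hIdealKer hx
    rw [congrKer, MonoidHom.mem_ker] at hxK ⊢
    rw [_root_.map_mul, _root_.map_mul, _root_.map_inv, hxK, mul_one, mul_inv_cancel]
  -- the retraction homomorphism on units
  set Em : (Matrix (Fin (2*n)) (Fin (2*n)) (Polynomial R))ˣ →* (Matrix (Fin (2*n)) (Fin (2*n)) (Polynomial R))ˣ :=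
    Units.map (ε.mapMatrix.toMonoidHom) with hEmdef
  have hEm_val : ∀ g : (Matrix (Fin (2*n)) (Fin (2*n)) (Polynomial R))ˣ,
      (↑(Em g) : Matrix (Fin (2*n)) (Fin (2*n)) (Polynomial R)) =
        (↑g : Matrix (Fin (2*n)) (Fin (2*n)) (Polynomial R)).map ε := fun g => rfl
  -- the key decomposition
  have key : ∀ g, g ∈ Esp ψ → Em g ∈ Esp ψ ∧ g * (Em g)⁻¹ ∈ REsp ψ I := by
    intro g hg
    rw [Esp] at hg
    refine Subgroup.closure_induction
      (p := fun g _ => Em g ∈ Esp ψ ∧ g * (Em g)⁻¹ ∈ REsp ψ I) ?_ ?_ ?_ ?_ hg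
    · rintro s ⟨v, hs | hs⟩
      · have hEs : (↑(Em s) : Matrix (Fin (2*n)) (Fin (2*n)) (Polynomial R))
            = Cmat ψ (fun i => ε (v i)) := by
          rw [hEm_val, hs, ← Cmat_map ε ψ hψu v, hεψ]
        refine ⟨Subgroup.subset_closure ⟨_, Or.inl hEs⟩, ?_⟩
        have hne : (fun i => ε ((-(fun i => ε (v i))) i)) = -(fun i => ε (v i)) :=
          funext fun i => by simp [hεidem]
        have hinvval : (↑(Em s)⁻¹ : Matrix (Fin (2*n)) (Fin (2*n)) (Polynomial R))
            = Cmat ψ (-(fun i => ε (v i))) :=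
          inv_val (Em s) _ (by rw [hEs]; exact Cmat_mul_neg hn h2P ψ hψs hψu _)
        have hval : (↑(s * (Em s)⁻¹) : Matrix (Fin (2*n)) (Fin (2*n)) (Polynomial R))
            = Cmat ψ (cadd ψ v (-(fun i => ε (v i)))) := by
          rw [Units.val_mul, hs, hinvval, Cmat_mul hn h2P ψ hψs hψu]
        have hd : ∀ i, ε (dvec ψ i) = dvec ψ i := by
          intro i
          rw [hψdef, dvec_map _ φ hinv]
          exact hεC _
        have hcm : ε (cmix ψ v (-(fun i => ε (v i)))) = 0 := by
          rw [← cmix_map ε ψ hψu, hεψ, hne]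
          exact cmix_neg_self h2P ψ hψs _
        have hvI : ∀ i, cadd ψ v (-(fun i => ε (v i))) i ∈ I := by
          intro i
          rw [← hker]
          show ε (v i + (-(fun i => ε (v i))) i + cmix ψ v _ * dvec ψ i) = 0
          rw [_root_.map_add, _root_.map_add, _root_.map_mul, hcm, zero_mul, add_zero]
          simp [hεidem]
        exact hIdealLe (Subgroup.subset_closure ⟨_, hvI, Or.inl hval⟩)
      · have hEs : (↑(Em s) : Matrix (Fin (2*n)) (Fin (2*n)) (Polynomial R))
            = Rmat ψ (fun i => ε (v i)) := by
          rw [hEm_val, hs, ← Rmat_map ε ψ hψu v, hεψ]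
        refine ⟨Subgroup.subset_closure ⟨_, Or.inr hEs⟩, ?_⟩
        have hne : (fun i => ε ((-(fun i => ε (v i))) i)) = -(fun i => ε (v i)) :=
          funext fun i => by simp [hεidem]
        have hinvval : (↑(Em s)⁻¹ : Matrix (Fin (2*n)) (Fin (2*n)) (Polynomial R))
            = Rmat ψ (-(fun i => ε (v i))) :=
          inv_val (Em s) _ (by rw [hEs]; exact Rmat_mul_neg hn h2P ψ hψs hψu _)
        have hval : (↑(s * (Em s)⁻¹) : Matrix (Fin (2*n)) (Fin (2*n)) (Polynomial R))
            = Rmat ψ (radd ψ v (-(fun i => ε (v i)))) := by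
          rw [Units.val_mul, hs, hinvval, Rmat_mul hn h2P ψ hψs hψu]
        have hcm : ε (rmix ψ v (-(fun i => ε (v i)))) = 0 := by
          rw [← rmix_map ε ψ hψu, hεψ, hne]
          exact rmix_neg_self h2P ψ hψs hψu _
        have hc : ∀ i, ε (cvec ψ i) = cvec ψ i := by
          intro i
          rw [hψdef]
          exact hεC _
        have hvI : ∀ i, radd ψ v (-(fun i => ε (v i))) i ∈ I := by
          intro i
          rw [← hker]
          show ε (v i + (-(fun i => ε (v i))) i + rmix ψ v _ * cvec ψ i) = 0
          rw [_root_.map_add, _root_.map_add, _root_.map_mul, hcm, zero_mul, add_zero]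
          simp [hεidem]
        exact hIdealLe (Subgroup.subset_closure ⟨_, hvI, Or.inr hval⟩)
    · exact ⟨by rw [_root_.map_one]; exact one_mem _, by rw [_root_.map_one, inv_one, mul_one]; exact one_mem _⟩
    · intro x y hx _ px py
      refine ⟨by rw [_root_.map_mul]; exact mul_mem px.1 py.1, ?_⟩
      have heq : (x*y) * (Em (x*y))⁻¹ = (x * (Em x)⁻¹) * (Em x * (y * (Em y)⁻¹) * (Em x)⁻¹) := by
        rw [_root_.map_mul]; group
      rw [heq]
      exact mul_mem px.2 (hconj _ px.1 _ py.2)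
    · intro x hx px
      refine ⟨by rw [_root_.map_inv]; exact inv_mem px.1, ?_⟩
      have heq : x⁻¹ * (Em x⁻¹)⁻¹ = x⁻¹ * (x * (Em x)⁻¹)⁻¹ * (x⁻¹)⁻¹ := by
        rw [_root_.map_inv]; group
      rw [heq]
      exact hconj _ (inv_mem hx) _ (inv_mem px.2)
  -- reverse inclusion
  have hle2 : Esp ψ ⊓ SpRel ψ I ≤ REsp ψ I := by
    intro g hg
    rw [Subgroup.mem_inf] at hg
    obtain ⟨hgE, hgRel⟩ := hg
    have hgK : g ∈ congrKer (Polynomial R) (2*n) I := (Subgroup.mem_inf.mp hgRel).2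
    obtain ⟨hE1, hE2⟩ := key g hgE
    have hπ : (↑g : Matrix (Fin (2*n)) (Fin (2*n)) (Polynomial R)).map (Ideal.Quotient.mk I) = 1 := by
      rw [congrKer, MonoidHom.mem_ker] at hgK
      have := congrArg Units.val hgK
      rwa [RingHom.toMonoidHom_eq_coe, Units.coe_map, MonoidHom.coe_coe,
        RingHom.mapMatrix_apply, Units.val_one] at this
    have hEg1 : Em g = 1 := by
      apply Units.ext
      rw [hEm_val, Units.val_one]
      refine Matrix.ext fun i j => ?_
      have hπij := congrFun (congrFun hπ i) j
      rw [Matrix.map_apply] at hπij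
      have h1q : ((1 : Matrix (Fin (2*n)) (Fin (2*n)) (Polynomial R ⧸ I)) i j)
          = (Ideal.Quotient.mk I) ((1 : Matrix (Fin (2*n)) (Fin (2*n)) (Polynomial R)) i j) := by
        simp [Matrix.one_apply, apply_ite (Ideal.Quotient.mk I)]
      rw [h1q] at hπij
      have hmem : (↑g : Matrix (Fin (2*n)) (Fin (2*n)) (Polynomial R)) i j
          - (1 : Matrix (Fin (2*n)) (Fin (2*n)) (Polynomial R)) i j ∈ I :=
        Ideal.Quotient.eq.mp hπij
      have hε0 := (hker _).mpr hmem
      rw [_root_.map_sub] at hε0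
      have hε1 : ε ((1 : Matrix (Fin (2*n)) (Fin (2*n)) (Polynomial R)) i j)
          = (1 : Matrix (Fin (2*n)) (Fin (2*n)) (Polynomial R)) i j := by
        simp [Matrix.one_apply, apply_ite ε]
      rw [Matrix.map_apply]
      rw [hε1] at hε0
      linear_combination hε0
    rw [hEg1, inv_one, mul_one] at hE2
    exact hE2
  exact le_antisymm hle1 hle2
end PaperESp
end

section
/- Let R be a commutative ring with unity, let n ≥ 2, and let ε ∈ E_{2n}(R). Then there exists ε_0 ∈ E_{2n−1}(R) such that ε^t ψ_n ε = (1 ⊥ ε_0)^t ψ_n (1 ⊥ ε_0). -/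
/- Common definitions: symplectic groups with respect to an invertible
   skew-symmetric (alternating) matrix, elementary symplectic groups,
   Pfaffian, standard symplectic matrix, elementary linear groups. -/

namespace PaperESp

open Matrix

variable {R : Type*} [CommRing R]

section Statement16Aux

/-! ### Auxiliary material for Statement 16 -/

-- rank-one update algebra
private lemma vmv_transpose {m : Type*} [Fintype m] (x y : m → R) :
    (vecMulVec x y)ᵀ = vecMulVec y x := by
  ext i j; simp [vecMulVec_apply, mul_comm]

private lemma vmv_mul {m : Type*} [Fintype m] (x y : m → R) (B : Matrix m m R) :
    vecMulVec x y * B = vecMulVec x (y ᵥ* B) := by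
  ext i j
  simp only [mul_apply, vecMulVec_apply, vecMul, dotProduct, Finset.mul_sum]
  exact Finset.sum_congr rfl fun k _ => by ring

private lemma mul_vmv {m : Type*} [Fintype m] (x y : m → R) (B : Matrix m m R) :
    B * vecMulVec x y = vecMulVec (B *ᵥ x) y := by
  ext i j
  simp only [mul_apply, vecMulVec_apply, mulVec, dotProduct, Finset.sum_mul]
  exact Finset.sum_congr rfl fun k _ => by ring

private lemma vmv_vmv {m : Type*} [Fintype m] (x y z w : m → R) :
    vecMulVec x y * vecMulVec z w = (y ⬝ᵥ z) • vecMulVec x w := by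
  ext i j
  simp only [mul_apply, vecMulVec_apply, Matrix.smul_apply, dotProduct, smul_eq_mul, Finset.sum_mul]
  exact Finset.sum_congr rfl fun k _ => by ring

private lemma congr_expand {m : Type*} [Fintype m] [DecidableEq m]
    (B : Matrix m m R) (x y : m → R) :
    (1 + vecMulVec x y)ᵀ * B * (1 + vecMulVec x y)
      = B + vecMulVec y (x ᵥ* B) + vecMulVec (B *ᵥ x) y
          + (x ⬝ᵥ (B *ᵥ x)) • vecMulVec y y := by
  rw [transpose_add, transpose_one, vmv_transpose]
  have expand : (1 + vecMulVec y x) * B * (1 + vecMulVec x y)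
      = B + vecMulVec y x * B + B * vecMulVec x y
          + vecMulVec y x * (B * vecMulVec x y) := by
    noncomm_ring
  have h3 : vecMulVec y x * (B * vecMulVec x y) = (x ⬝ᵥ (B *ᵥ x)) • vecMulVec y y := by
    rw [mul_vmv, vmv_vmv]
  rw [expand, h3, vmv_mul, mul_vmv]

-- the "flip" map x ↦ ψ x
private def flip {n : ℕ} (x : Fin (2*n) → R) : Fin (2*n) → R := fun i =>
  if h : i.1 % 2 = 0 then x ⟨i.1+1, by have := i.2; omega⟩
  else - x ⟨i.1-1, by have := i.2; omega⟩

private lemma flip_flip {n : ℕ} (x : Fin (2*n) → R) : flip (flip x) = - x := by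
  funext i
  simp only [flip, Pi.neg_apply]
  by_cases h : i.1 % 2 = 0
  · rw [dif_pos h, dif_neg (show ¬((i.1+1) % 2 = 0) by omega)]
    have hi : (⟨i.1 + 1 - 1, by have := i.2; omega⟩ : Fin (2*n)) = i :=
      Fin.ext (show i.1 + 1 - 1 = i.1 by omega)
    exact congrArg (fun j => - x j) hi
  · rw [dif_neg h, dif_pos (show (i.1-1) % 2 = 0 by omega)]
    have hi : (⟨i.1 - 1 + 1, by have := i.2; omega⟩ : Fin (2*n)) = i :=
      Fin.ext (show i.1 - 1 + 1 = i.1 by omega)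
    exact congrArg (fun j => - x j) hi

private lemma psi_apply_one {n : ℕ} (i j : Fin (2*n)) (h1 : i.1 + 1 = j.1) (h2 : j.1 % 2 = 1) :
    psi R n i j = 1 := by
  simp only [psi, of_apply]; rw [if_pos ⟨h1, h2⟩]

private lemma psi_apply_negone {n : ℕ} (i j : Fin (2*n)) (h1 : j.1 + 1 = i.1) (h2 : i.1 % 2 = 1) :
    psi R n i j = -1 := by
  simp only [psi, of_apply]; rw [if_neg (by omega), if_pos ⟨h1, h2⟩]

private lemma psi_apply_zero {n : ℕ} (i j : Fin (2*n))
    (h1 : ¬(i.1 + 1 = j.1 ∧ j.1 % 2 = 1)) (h2 : ¬(j.1 + 1 = i.1 ∧ i.1 % 2 = 1)) :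
    psi R n i j = 0 := by
  simp only [psi, of_apply]; rw [if_neg h1, if_neg h2]

private lemma psi_mulVec {n : ℕ} (x : Fin (2*n) → R) : psi R n *ᵥ x = flip x := by
  funext i
  simp only [mulVec, dotProduct, flip]
  by_cases h : i.1 % 2 = 0
  · rw [dif_pos h, Finset.sum_eq_single (⟨i.1+1, by have := i.2; omega⟩ : Fin (2*n))]
    · rw [psi_apply_one i ⟨i.1+1, by have := i.2; omega⟩ rfl (show (i.1+1) % 2 = 1 by omega),
        one_mul]
    · intro b _ hb
      have hb' : b.1 ≠ i.1 + 1 := fun hc => hb (Fin.ext hc)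
      rw [psi_apply_zero i b (by omega) (by omega), zero_mul]
    · intro habs; exact absurd (Finset.mem_univ _) habs
  · rw [dif_neg h, Finset.sum_eq_single (⟨i.1-1, by have := i.2; omega⟩ : Fin (2*n))]
    · rw [psi_apply_negone i ⟨i.1-1, by have := i.2; omega⟩
        (show i.1 - 1 + 1 = i.1 by omega) (show i.1 % 2 = 1 by omega), neg_one_mul]
    · intro b _ hb
      have hb' : b.1 ≠ i.1 - 1 := fun hc => hb (Fin.ext hc)
      rw [psi_apply_zero i b (by omega) (by omega), zero_mul]
    · intro habs; exact absurd (Finset.mem_univ _) habs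

private lemma psi_transpose (n : ℕ) : (psi R n)ᵀ = - psi R n := by
  ext i j
  simp only [transpose_apply, psi, of_apply, Matrix.neg_apply]
  split_ifs <;> first | omega | ring

private lemma vecMul_psi {n : ℕ} (x : Fin (2*n) → R) : x ᵥ* psi R n = - flip x := by
  have : x ᵥ* psi R n = x ᵥ* ((psi R n)ᵀ)ᵀ := by rw [transpose_transpose]
  rw [this, vecMul_transpose, psi_transpose, neg_mulVec, psi_mulVec]

private def Umat (n : ℕ) : Matrix (Fin (2*n)) (Fin (2*n)) R :=
  Matrix.of fun i j => if i.1 + 1 = j.1 ∧ j.1 % 2 = 1 then (1:R) else 0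

private lemma psi_eq_U (n : ℕ) : psi R n = Umat n - (Umat n)ᵀ := by
  ext i j
  simp only [psi, Umat, of_apply, Matrix.sub_apply, transpose_apply]
  split_ifs <;> first | omega | ring

private lemma dot_psi_self {n : ℕ} (x : Fin (2*n) → R) : x ⬝ᵥ (psi R n *ᵥ x) = 0 := by
  rw [psi_eq_U, sub_mulVec, dotProduct_sub]
  have h1 : (Umat (R:=R) n)ᵀ *ᵥ x = x ᵥ* Umat n := by
    rw [← vecMul_transpose, transpose_transpose]
  rw [h1, dotProduct_comm x (x ᵥ* Umat n), ← dotProduct_mulVec, sub_self]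

-- onePerp machinery
private def perpEquiv (n : ℕ) (hn : 0 < n) : Fin (2*n) ≃ (Fin 1 ⊕ Fin (2*n-1)) where
  toFun i := if h : i.1 = 0 then Sum.inl 0 else Sum.inr ⟨i.1-1, by have := i.2; omega⟩
  invFun x := x.elim (fun _ => ⟨0, by omega⟩) (fun t => ⟨t.1+1, by have := t.2; omega⟩)
  left_inv i := by
    by_cases h : i.1 = 0
    · simp only [dif_pos h]
      exact Fin.ext (show (0:ℕ) = i.1 from h.symm)
    · simp only [dif_neg h]
      exact Fin.ext (show i.1 - 1 + 1 = i.1 by omega)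
  right_inv x := by
    cases x with
    | inl a => exact congrArg Sum.inl (Subsingleton.elim _ _)
    | inr t =>
      simp only [Sum.elim_inr]
      split_ifs with hc
      · omega
      exact congrArg Sum.inr (Fin.ext (show t.1 + 1 - 1 = t.1 by omega))

private lemma onePerp_eq {n : ℕ} (hn : 0 < n) (β : Matrix (Fin (2*n-1)) (Fin (2*n-1)) R) :
    onePerp (n := n) β
      = (fromBlocks (1 : Matrix (Fin 1) (Fin 1) R) 0 0 β).submatrix
          (perpEquiv n hn) (perpEquiv n hn) := by
  ext i j
  simp only [onePerp, of_apply, submatrix_apply, perpEquiv, Equiv.coe_fn_mk]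
  by_cases hi : i.1 = 0 <;> by_cases hj : j.1 = 0 <;>
    simp [hi, hj, fromBlocks, one_apply]

private lemma onePerp_mul {n : ℕ} (hn : 0 < n)
    (α β : Matrix (Fin (2*n-1)) (Fin (2*n-1)) R) :
    onePerp (n := n) α * onePerp β = onePerp (α * β) := by
  rw [onePerp_eq hn, onePerp_eq hn, onePerp_eq hn, submatrix_mul_equiv]
  have : fromBlocks (1 : Matrix (Fin 1) (Fin 1) R) 0 0 α
      * fromBlocks (1 : Matrix (Fin 1) (Fin 1) R) 0 0 β
      = fromBlocks (1 : Matrix (Fin 1) (Fin 1) R) 0 0 (α * β) := by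
    rw [fromBlocks_multiply]; simp
  rw [this]

private lemma onePerp_one {n : ℕ} (hn : 0 < n) :
    onePerp (n := n) (1 : Matrix (Fin (2*n-1)) (Fin (2*n-1)) R) = 1 := by
  rw [onePerp_eq hn, fromBlocks_one, submatrix_one_equiv]

private def shiftUp {n : ℕ} (p : Fin (2*n-1) → R) : Fin (2*n) → R := fun i =>
  if h : i.1 = 0 then 0 else p ⟨i.1-1, by have := i.2; omega⟩

private lemma onePerp_one_add {n : ℕ} (x y : Fin (2*n-1) → R) :
    onePerp (n := n) (1 + vecMulVec x y) = 1 + vecMulVec (shiftUp x) (shiftUp y) := by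
  ext i j
  simp only [onePerp, of_apply, Matrix.add_apply, one_apply, vecMulVec_apply, shiftUp, Fin.ext_iff]
  by_cases hi : i.1 = 0 <;> by_cases hj : j.1 = 0 <;>
    simp only [hi, hj, dite_true, dite_false, if_true, if_false, dif_pos, dif_neg,
      not_false_iff] <;>
    (try split_ifs) <;>
    first | omega | rfl | (exfalso; omega) | ring

private lemma onePerp_row0 {n : ℕ} (hn : 0 < n) (γ : Matrix (Fin (2*n-1)) (Fin (2*n-1)) R) :
    onePerp (n := n) γ ⟨0, by omega⟩ = Pi.single (⟨0, by omega⟩ : Fin (2*n)) (1:R) := by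
  funext j
  by_cases hj : j.1 = 0 <;>
    simp [onePerp, Pi.single_apply, Fin.ext_iff, hj]

private lemma onePerp_col0 {n : ℕ} (hn : 0 < n) (γ : Matrix (Fin (2*n-1)) (Fin (2*n-1)) R) :
    (fun k => onePerp (n := n) γ k ⟨0, by omega⟩) = Pi.single (⟨0, by omega⟩ : Fin (2*n)) (1:R) := by
  funext k
  by_cases hk : k.1 = 0 <;>
    simp [onePerp, Pi.single_apply, Fin.ext_iff, hk]

private lemma onePerp_mulVec_e0 {n : ℕ} (hn : 0 < n) (γ : Matrix (Fin (2*n-1)) (Fin (2*n-1)) R) :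
    onePerp (n := n) γ *ᵥ Pi.single (⟨0, by omega⟩ : Fin (2*n)) (1:R)
      = Pi.single (⟨0, by omega⟩ : Fin (2*n)) (1:R) := by
  funext i
  show (fun j => onePerp (n := n) γ i j) ⬝ᵥ Pi.single ⟨0, by omega⟩ 1 = _
  rw [dotProduct_single, mul_one]
  exact congrFun (onePerp_col0 hn γ) i

private lemma e0_vecMul_onePerp {n : ℕ} (hn : 0 < n) (γ : Matrix (Fin (2*n-1)) (Fin (2*n-1)) R) :
    Pi.single (⟨0, by omega⟩ : Fin (2*n)) (1:R) ᵥ* onePerp (n := n) γ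
      = Pi.single (⟨0, by omega⟩ : Fin (2*n)) (1:R) := by
  funext j
  show Pi.single ⟨0, by omega⟩ 1 ⬝ᵥ (fun i => onePerp (n := n) γ i j) = _
  rw [single_dotProduct, one_mul]
  exact congrFun (congrArg (fun v => v) (onePerp_row0 hn γ)) j

private lemma vecMul_onePerp_at0 {n : ℕ} (hn : 0 < n) (γ : Matrix (Fin (2*n-1)) (Fin (2*n-1)) R)
    (y : Fin (2*n) → R) :
    (y ᵥ* onePerp (n := n) γ) ⟨0, by omega⟩ = y ⟨0, by omega⟩ := by
  show y ⬝ᵥ (fun k => onePerp (n := n) γ k ⟨0, by omega⟩) = _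
  rw [onePerp_col0 hn, dotProduct_single, mul_one]

private lemma onePerp_mulVec_at0 {n : ℕ} (hn : 0 < n) (γ : Matrix (Fin (2*n-1)) (Fin (2*n-1)) R)
    (x : Fin (2*n) → R) :
    (onePerp (n := n) γ *ᵥ x) ⟨0, by omega⟩ = x ⟨0, by omega⟩ := by
  show (fun j => onePerp (n := n) γ ⟨0, by omega⟩ j) ⬝ᵥ x = _
  have : (fun j => onePerp (n := n) γ ⟨0, by omega⟩ j) = Pi.single (⟨0, by omega⟩ : Fin (2*n)) (1:R) :=
    onePerp_row0 hn γ
  rw [this, single_dotProduct, one_mul]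

-- elementary units
private def elemU (m : ℕ) (i j : Fin m) (hij : i ≠ j) (a : R) :
    (Matrix (Fin m) (Fin m) R)ˣ where
  val := 1 + Matrix.single i j a
  inv := 1 + Matrix.single i j (-a)
  val_inv := by
    have h0 : Matrix.single i j a * Matrix.single i j (-a) = 0 :=
      Matrix.single_mul_single_of_ne (c := a) i j i hij.symm (-a)
    have h1 : Matrix.single i j a + Matrix.single i j (-a) = 0 := by
      rw [← Matrix.single_add]; simp
    have expand : (1 + Matrix.single i j a) * (1 + Matrix.single i j (-a))
        = 1 + (Matrix.single i j a + Matrix.single i j (-a))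
          + Matrix.single i j a * Matrix.single i j (-a) := by noncomm_ring
    rw [expand, h0, h1]; simp
  inv_val := by
    have h0 : Matrix.single i j (-a) * Matrix.single i j a = 0 :=
      Matrix.single_mul_single_of_ne (c := -a) i j i hij.symm a
    have h1 : Matrix.single i j (-a) + Matrix.single i j a = 0 := by
      rw [← Matrix.single_add]; simp
    have expand : (1 + Matrix.single i j (-a)) * (1 + Matrix.single i j a)
        = 1 + (Matrix.single i j (-a) + Matrix.single i j a)
          + Matrix.single i j (-a) * Matrix.single i j a := by noncomm_ring
    rw [expand, h0, h1]; simp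

private lemma elemU_mem {m : ℕ} (i j : Fin m) (hij : i ≠ j) (a : R) :
    elemU m i j hij a ∈ Egrp R m :=
  Subgroup.subset_closure ⟨i, j, a, hij, rfl⟩

private lemma std_eq_vmv {m : ℕ} (i j : Fin m) (a : R) :
    Matrix.single i j a = vecMulVec (Pi.single i a) (Pi.single j 1) := by
  ext u v
  simp only [Matrix.single, of_apply, vecMulVec_apply, Pi.single_apply]
  split_ifs <;> simp_all <;> first | rfl | ring

private lemma std_eq_vmv' {m : ℕ} (i j : Fin m) (a : R) :
    Matrix.single i j a = vecMulVec (Pi.single i 1) (Pi.single j a) := by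
  ext u v
  simp only [Matrix.single, of_apply, vecMulVec_apply, Pi.single_apply]
  split_ifs <;> simp_all <;> first | rfl | ring

private lemma vmv_add_left {m : Type*} (a b y : m → R) :
    vecMulVec (a + b) y = vecMulVec a y + vecMulVec b y := by
  ext u v; simp [vecMulVec_apply]; ring

private lemma vmv_add_right {m : Type*} (x a b : m → R) :
    vecMulVec x (a + b) = vecMulVec x a + vecMulVec x b := by
  ext u v; simp [vecMulVec_apply]; ring

private lemma colE {m : ℕ} (j : Fin m) (p : Fin m → R) (hp : p j = 0) :
    ∃ κ : (Matrix (Fin m) (Fin m) R)ˣ, κ ∈ Egrp R m ∧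
      (κ : Matrix (Fin m) (Fin m) R) = 1 + vecMulVec p (Pi.single j 1) := by
  classical
  suffices h : ∀ s : Finset (Fin m), ∃ κ : (Matrix (Fin m) (Fin m) R)ˣ, κ ∈ Egrp R m ∧
      (κ : Matrix (Fin m) (Fin m) R)
        = 1 + vecMulVec (fun k => if k ∈ s then p k else 0) (Pi.single j 1) by
    obtain ⟨κ, h1, h2⟩ := h Finset.univ
    refine ⟨κ, h1, ?_⟩
    have hfun : (fun k => if k ∈ (Finset.univ : Finset (Fin m)) then p k else 0) = p := by
      funext k; simp
    rw [h2, hfun]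
  intro s
  induction s using Finset.induction_on with
  | empty =>
      refine ⟨1, one_mem _, ?_⟩
      have hz : vecMulVec (fun k => if k ∈ (∅ : Finset (Fin m)) then p k else 0)
          (Pi.single j (1:R)) = 0 := by
        ext u v; simp [vecMulVec_apply]
      rw [Units.val_one, hz, add_zero]
  | @insert i s his ih =>
      obtain ⟨κ, hκ, hval⟩ := ih
      by_cases hij : i = j
      · refine ⟨κ, hκ, ?_⟩
        have hfun : (fun k => if k ∈ insert i s then p k else 0)
            = (fun k => if k ∈ s then p k else 0) := by
          funext k
          by_cases hk : k = i
          · subst hk; simp [his, hij, hp]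
          · simp [Finset.mem_insert, hk]
        rw [hval, hfun]
      · refine ⟨elemU m i j hij (p i) * κ, mul_mem (elemU_mem i j hij (p i)) hκ, ?_⟩
        rw [Units.val_mul, hval]
        show (1 + Matrix.single i j (p i)) * _ = _
        rw [std_eq_vmv]
        have expand : (1 + vecMulVec (Pi.single i (p i)) (Pi.single j (1:R)))
              * (1 + vecMulVec (fun k => if k ∈ s then p k else 0) (Pi.single j 1))
            = 1 + (vecMulVec (Pi.single i (p i)) (Pi.single j 1)
                + vecMulVec (fun k => if k ∈ s then p k else 0) (Pi.single j 1))
              + vecMulVec (Pi.single i (p i)) (Pi.single j 1)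
                * vecMulVec (fun k => if k ∈ s then p k else 0) (Pi.single j 1) := by
          noncomm_ring
        have hcross : vecMulVec (Pi.single i (p i)) (Pi.single j (1:R))
              * vecMulVec (fun k => if k ∈ s then p k else 0) (Pi.single j 1) = 0 := by
          rw [vmv_vmv]
          have hd : (Pi.single j (1:R)) ⬝ᵥ (fun k => if k ∈ s then p k else 0) = 0 := by
            rw [single_dotProduct, one_mul]
            show (if j ∈ s then p j else 0) = 0
            rw [hp]; simp
          rw [hd, zero_smul]
        rw [expand, hcross, add_zero, ← vmv_add_left]
        have hfun : Pi.single i (p i) + (fun k => if k ∈ s then p k else 0)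
            = (fun k => if k ∈ insert i s then p k else 0) := by
          funext k
          by_cases hk : k = i
          · subst hk; simp [his]
          · simp [Pi.single_apply, hk, Finset.mem_insert]
        rw [hfun]

private lemma rowE {m : ℕ} (j : Fin m) (q : Fin m → R) (hq : q j = 0) :
    ∃ κ : (Matrix (Fin m) (Fin m) R)ˣ, κ ∈ Egrp R m ∧
      (κ : Matrix (Fin m) (Fin m) R) = 1 + vecMulVec (Pi.single j 1) q := by
  classical
  suffices h : ∀ s : Finset (Fin m), ∃ κ : (Matrix (Fin m) (Fin m) R)ˣ, κ ∈ Egrp R m ∧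
      (κ : Matrix (Fin m) (Fin m) R)
        = 1 + vecMulVec (Pi.single j 1) (fun k => if k ∈ s then q k else 0) by
    obtain ⟨κ, h1, h2⟩ := h Finset.univ
    refine ⟨κ, h1, ?_⟩
    have hfun : (fun k => if k ∈ (Finset.univ : Finset (Fin m)) then q k else 0) = q := by
      funext k; simp
    rw [h2, hfun]
  intro s
  induction s using Finset.induction_on with
  | empty =>
      refine ⟨1, one_mem _, ?_⟩
      have hz : vecMulVec (Pi.single j (1:R))
          (fun k => if k ∈ (∅ : Finset (Fin m)) then q k else 0) = 0 := by
        ext u v; simp [vecMulVec_apply]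
      rw [Units.val_one, hz, add_zero]
  | @insert i s his ih =>
      obtain ⟨κ, hκ, hval⟩ := ih
      by_cases hij : j = i
      · refine ⟨κ, hκ, ?_⟩
        have hfun : (fun k => if k ∈ insert i s then q k else 0)
            = (fun k => if k ∈ s then q k else 0) := by
          funext k
          by_cases hk : k = i
          · have hqi : q i = 0 := by rw [← hij]; exact hq
            simp [hk, his, hqi]
          · simp [Finset.mem_insert, hk]
        rw [hval, hfun]
      · refine ⟨elemU m j i hij (q i) * κ, mul_mem (elemU_mem j i hij (q i)) hκ, ?_⟩
        rw [Units.val_mul, hval]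
        show (1 + Matrix.single j i (q i)) * _ = _
        rw [std_eq_vmv']
        have expand : (1 + vecMulVec (Pi.single j (1:R)) (Pi.single i (q i)))
              * (1 + vecMulVec (Pi.single j 1) (fun k => if k ∈ s then q k else 0))
            = 1 + (vecMulVec (Pi.single j 1) (Pi.single i (q i))
                + vecMulVec (Pi.single j 1) (fun k => if k ∈ s then q k else 0))
              + vecMulVec (Pi.single j 1) (Pi.single i (q i))
                * vecMulVec (Pi.single j 1) (fun k => if k ∈ s then q k else 0) := by
          noncomm_ring
        have hcross : vecMulVec (Pi.single j (1:R)) (Pi.single i (q i))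
              * vecMulVec (Pi.single j 1) (fun k => if k ∈ s then q k else 0) = 0 := by
          rw [vmv_vmv]
          have hd : (Pi.single i (q i)) ⬝ᵥ (Pi.single j (1:R)) = 0 := by
            rw [dotProduct_single, mul_one]
            exact Pi.single_eq_of_ne hij _
          rw [hd, zero_smul]
        rw [expand, hcross, add_zero, ← vmv_add_right]
        have hfun : Pi.single i (q i) + (fun k => if k ∈ s then q k else 0)
            = (fun k => if k ∈ insert i s then q k else 0) := by
          funext k
          by_cases hk : k = i
          · subst hk; simp [his]
          · simp [Pi.single_apply, hk, Finset.mem_insert]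
        rw [hfun]

private lemma flip_e0 {n : ℕ} (hn : 0 < n) :
    flip (R := R) (Pi.single (⟨0, by omega⟩ : Fin (2*n)) 1)
      = - Pi.single (⟨1, by omega⟩ : Fin (2*n)) 1 := by
  funext i
  by_cases h : i.1 % 2 = 0 <;>
    simp [flip, h, Pi.single_apply, Fin.ext_iff] <;>
    (try split_ifs) <;> (try intro h1) <;>
    first | omega | rfl | (exfalso; omega) | ring

private lemma flip_s1 {n : ℕ} (hn : 0 < n) :
    flip (R := R) (Pi.single (⟨1, by omega⟩ : Fin (2*n)) 1)
      = Pi.single (⟨0, by omega⟩ : Fin (2*n)) 1 := by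
  funext i
  by_cases h : i.1 % 2 = 0 <;>
    simp [flip, h, Pi.single_apply, Fin.ext_iff] <;>
    (try split_ifs) <;> (try intro h1) <;>
    first | omega | rfl | (exfalso; omega) | ring

private lemma shiftUp_single {n : ℕ} (i : Fin (2*n)) (hi : i.1 ≠ 0) (a : R) :
    shiftUp (Pi.single (⟨i.1-1, by have := i.2; omega⟩ : Fin (2*n-1)) a) = Pi.single i a := by
  funext k
  simp only [shiftUp, Pi.single_apply]
  by_cases hk : k.1 = 0
  · rw [dif_pos hk,
      if_neg (fun hc => hi (by have h2 : k.1 = i.1 := congrArg Fin.val hc; omega))]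
  · rw [dif_neg hk]
    by_cases hki : k = i
    · rw [if_pos (Fin.ext (show k.1 - 1 = i.1 - 1 by rw [hki])), if_pos hki]
    · rw [if_neg (fun hc => hki (Fin.ext (by
        have h2 : k.1 - 1 = i.1 - 1 := congrArg Fin.val hc; omega))), if_neg hki]

private lemma shiftUp_single0 {n : ℕ} (hn : 0 < n) :
    shiftUp (R := R) (Pi.single (⟨0, by omega⟩ : Fin (2*n-1)) 1)
      = Pi.single (⟨1, by omega⟩ : Fin (2*n)) 1 := by
  funext k
  simp only [shiftUp, Pi.single_apply]
  by_cases hk : k.1 = 0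
  · rw [dif_pos hk,
      if_neg (fun hc => absurd (show k.1 = 1 from congrArg Fin.val hc) (by omega))]
  · rw [dif_neg hk]
    by_cases hk1 : k.1 = 1
    · rw [if_pos (Fin.ext (show k.1 - 1 = 0 by omega)), if_pos (Fin.ext hk1)]
    · rw [if_neg (fun hc => hk1 (by have h2 : k.1 - 1 = 0 := congrArg Fin.val hc; omega)),
        if_neg (fun hc => hk1 (congrArg Fin.val hc))]

private lemma eta_mul_rowgen {n : ℕ} (hn : 0 < n) (E : Matrix (Fin (2*n-1)) (Fin (2*n-1)) R)
    (v : Fin (2*n) → R) :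
    onePerp (n := n) E * (1 + vecMulVec (Pi.single (⟨0, by omega⟩ : Fin (2*n)) 1) v)
      = onePerp (n := n) E + vecMulVec (Pi.single (⟨0, by omega⟩ : Fin (2*n)) 1) v := by
  rw [mul_add, mul_one, mul_vmv, onePerp_mulVec_e0 hn]

private lemma rowgen_mul_eta {n : ℕ} (hn : 0 < n) (E : Matrix (Fin (2*n-1)) (Fin (2*n-1)) R)
    (v : Fin (2*n) → R) :
    (1 + vecMulVec (Pi.single (⟨0, by omega⟩ : Fin (2*n)) 1) v) * onePerp (n := n) E
      = onePerp (n := n) E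
        + vecMulVec (Pi.single (⟨0, by omega⟩ : Fin (2*n)) 1) (v ᵥ* onePerp (n := n) E) := by
  rw [add_mul, one_mul, vmv_mul]

private lemma eta_mul_colgen {n : ℕ} (hn : 0 < n) (E : Matrix (Fin (2*n-1)) (Fin (2*n-1)) R)
    (w : Fin (2*n) → R) :
    onePerp (n := n) E * (1 + vecMulVec w (Pi.single (⟨0, by omega⟩ : Fin (2*n)) 1))
      = onePerp (n := n) E
        + vecMulVec (onePerp (n := n) E *ᵥ w) (Pi.single (⟨0, by omega⟩ : Fin (2*n)) 1) := by
  rw [mul_add, mul_one, mul_vmv]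

private lemma colgen_mul_eta {n : ℕ} (hn : 0 < n) (E : Matrix (Fin (2*n-1)) (Fin (2*n-1)) R)
    (w : Fin (2*n) → R) :
    (1 + vecMulVec w (Pi.single (⟨0, by omega⟩ : Fin (2*n)) 1)) * onePerp (n := n) E
      = onePerp (n := n) E + vecMulVec w (Pi.single (⟨0, by omega⟩ : Fin (2*n)) 1) := by
  rw [add_mul, one_mul, vmv_mul, e0_vecMul_onePerp hn]

private lemma sandwich {m' : ℕ} (A B C D : Matrix (Fin m') (Fin m') R)
    (h : Aᵀ * D * A = Bᵀ * D * B) :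
    (A * C)ᵀ * D * (A * C) = (B * C)ᵀ * D * (B * C) := by
  have e1 : (A * C)ᵀ * D * (A * C) = Cᵀ * (Aᵀ * D * A) * C := by
    rw [transpose_mul]; noncomm_ring
  have e2 : (B * C)ᵀ * D * (B * C) = Cᵀ * (Bᵀ * D * B) * C := by
    rw [transpose_mul]; noncomm_ring
  rw [e1, e2, h]

private lemma Ncongr {n : ℕ} (hn : 0 < n) (y : Fin (2*n) → R)
    (hy : y ⟨0, by omega⟩ = 0) :
    ∃ κ : (Matrix (Fin (2*n-1)) (Fin (2*n-1)) R)ˣ, κ ∈ Egrp R (2*n-1) ∧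
      (1 + vecMulVec (Pi.single (⟨0, by omega⟩ : Fin (2*n)) 1) y)ᵀ * psi R n
          * (1 + vecMulVec (Pi.single (⟨0, by omega⟩ : Fin (2*n)) 1) y)
        = (onePerp (n := n) (κ : Matrix (Fin (2*n-1)) (Fin (2*n-1)) R))ᵀ * psi R n
          * onePerp (n := n) (κ : Matrix (Fin (2*n-1)) (Fin (2*n-1)) R) := by
  classical
  set i0 : Fin (2*n) := ⟨0, by omega⟩ with hi0def
  set i1 : Fin (2*n) := ⟨1, by omega⟩ with hi1def
  set s1 : Fin (2*n) → R := Pi.single i1 1 with hs1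
  set r : Fin (2*n) → R := fun i => - y i + y i1 * s1 i with hr
  have hr0 : r i0 = 0 := by
    rw [hr]
    show - y i0 + y i1 * s1 i0 = 0
    have : s1 i0 = 0 := by
      rw [hs1]
      exact Pi.single_eq_of_ne
        (fun hc => absurd (show (0:ℕ) = 1 from congrArg Fin.val hc) (by omega)) _
    rw [this, hy, mul_zero]; ring
  have hr1 : r i1 = 0 := by
    rw [hr]
    show - y i1 + y i1 * s1 i1 = 0
    have : s1 i1 = 1 := by rw [hs1]; exact Pi.single_eq_same _ _
    rw [this, mul_one]; ring
  have hP0 : flip r i0 = 0 := by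
    show (if h : (i0.1 % 2 = 0) then r ⟨i0.1+1, by have := i0.2; omega⟩
      else - r ⟨i0.1-1, by have := i0.2; omega⟩) = 0
    rw [dif_pos (show i0.1 % 2 = 0 from rfl)]
    try exact hr1
  have hP1 : flip r i1 = 0 := by
    show (if h : (i1.1 % 2 = 0) then r ⟨i1.1+1, by have := i1.2; omega⟩
      else - r ⟨i1.1-1, by have := i1.2; omega⟩) = 0
    rw [dif_neg (show ¬(i1.1 % 2 = 0) from fun hc => Nat.one_ne_zero hc)]
    rw [show r ⟨i1.1-1, by have := i1.2; omega⟩ = r i0 from congrArg r (Fin.ext rfl), hr0,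
      neg_zero]
  obtain ⟨κ, hκmem, hκval⟩ := colE (⟨0, by omega⟩ : Fin (2*n-1))
    (fun t => flip r ⟨t.1+1, by have := t.2; omega⟩)
    (show flip r ⟨0+1, by omega⟩ = 0 from (congrArg (flip r) (Fin.ext rfl)).trans hP1)
  refine ⟨κ, hκmem, ?_⟩
  have hshift1 : shiftUp (fun t : Fin (2*n-1) => flip r ⟨t.1+1, by have := t.2; omega⟩)
      = flip r := by
    funext i
    simp only [shiftUp]
    by_cases h : i.1 = 0
    · rw [dif_pos h]
      rw [show i = i0 from Fin.ext h, hP0]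
    · rw [dif_neg h]
      exact congrArg (flip r) (Fin.ext (show i.1 - 1 + 1 = i.1 by omega))
  have hK : onePerp (n := n) (κ : Matrix (Fin (2*n-1)) (Fin (2*n-1)) R)
      = 1 + vecMulVec (flip r) s1 := by
    rw [hκval, onePerp_one_add, hshift1, hs1, shiftUp_single0 hn]
  rw [hK, congr_expand, congr_expand, dot_psi_self, dot_psi_self, zero_smul, zero_smul,
    add_zero, add_zero, psi_mulVec, psi_mulVec, vecMul_psi, vecMul_psi, flip_flip, neg_neg]
  rw [show flip (R := R) (Pi.single i0 1) = - s1 from (flip_e0 hn).trans (by rw [hs1])]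
  rw [neg_neg]
  ext u v
  simp only [Matrix.add_apply, vecMulVec_apply, Pi.neg_apply, hr]
  ring

private lemma Mcongr {n : ℕ} (hn : 0 < n) (x : Fin (2*n) → R)
    (hx : x ⟨0, by omega⟩ = 0) :
    ∃ κ : (Matrix (Fin (2*n-1)) (Fin (2*n-1)) R)ˣ, κ ∈ Egrp R (2*n-1) ∧
      (1 + vecMulVec x (Pi.single (⟨0, by omega⟩ : Fin (2*n)) 1))ᵀ * psi R n
          * (1 + vecMulVec x (Pi.single (⟨0, by omega⟩ : Fin (2*n)) 1))
        = (onePerp (n := n) (κ : Matrix (Fin (2*n-1)) (Fin (2*n-1)) R))ᵀ * psi R n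
          * onePerp (n := n) (κ : Matrix (Fin (2*n-1)) (Fin (2*n-1)) R) := by
  classical
  set i0 : Fin (2*n) := ⟨0, by omega⟩ with hi0def
  set i1 : Fin (2*n) := ⟨1, by omega⟩ with hi1def
  set e0 : Fin (2*n) → R := Pi.single i0 1 with he0
  set q : Fin (2*n) → R := fun i => - flip x i + x i1 * e0 i with hq
  have hfx0 : flip x i0 = x i1 := by
    show (if h : (i0.1 % 2 = 0) then x ⟨i0.1+1, by have := i0.2; omega⟩
      else - x ⟨i0.1-1, by have := i0.2; omega⟩) = x i1
    rw [dif_pos (show i0.1 % 2 = 0 from rfl)]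
    try exact congrArg x (Fin.ext rfl)
  have hfx1 : flip x i1 = - x i0 := by
    show (if h : (i1.1 % 2 = 0) then x ⟨i1.1+1, by have := i1.2; omega⟩
      else - x ⟨i1.1-1, by have := i1.2; omega⟩) = - x i0
    rw [dif_neg (show ¬(i1.1 % 2 = 0) from fun hc => Nat.one_ne_zero hc)]
    try exact congrArg (fun t => - x t) (Fin.ext rfl)
  have hq0 : q i0 = 0 := by
    rw [hq]
    show - flip x i0 + x i1 * e0 i0 = 0
    have : e0 i0 = 1 := by rw [he0]; exact Pi.single_eq_same _ _
    rw [this, hfx0, mul_one]; ring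
  have hq1 : q i1 = 0 := by
    rw [hq]
    show - flip x i1 + x i1 * e0 i1 = 0
    have : e0 i1 = 0 := by
      rw [he0]
      exact Pi.single_eq_of_ne (fun hc => Nat.one_ne_zero (congrArg Fin.val hc)) _
    rw [this, hfx1, hx, mul_zero]
    ring
  obtain ⟨κ, hκmem, hκval⟩ := rowE (⟨0, by omega⟩ : Fin (2*n-1))
    (fun t => q ⟨t.1+1, by have := t.2; omega⟩)
    (show q ⟨0+1, by omega⟩ = 0 from (congrArg q (Fin.ext rfl)).trans hq1)
  refine ⟨κ, hκmem, ?_⟩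
  have hshift1 : shiftUp (fun t : Fin (2*n-1) => q ⟨t.1+1, by have := t.2; omega⟩) = q := by
    funext i
    simp only [shiftUp]
    by_cases h : i.1 = 0
    · rw [dif_pos h]
      rw [show i = i0 from Fin.ext h, hq0]
    · rw [dif_neg h]
      exact congrArg q (Fin.ext (show i.1 - 1 + 1 = i.1 by omega))
  have hK : onePerp (n := n) (κ : Matrix (Fin (2*n-1)) (Fin (2*n-1)) R)
      = 1 + vecMulVec (Pi.single i1 1) q := by
    rw [hκval, onePerp_one_add, hshift1, shiftUp_single0 hn]
  rw [hK, congr_expand, congr_expand, dot_psi_self, dot_psi_self, zero_smul, zero_smul,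
    add_zero, add_zero, psi_mulVec, psi_mulVec, vecMul_psi, vecMul_psi]
  rw [show flip (R := R) (Pi.single i1 1) = e0 from (flip_s1 hn).trans (by rw [he0])]
  ext u v
  simp only [Matrix.add_apply, vecMulVec_apply, Pi.neg_apply, hq]
  ring

end Statement16Aux


set_option maxHeartbeats 1000000 in
/-- for `n ≥ 2` and `ε ∈ E_{2n}(R)` there is `ε₀ ∈ E_{2n-1}(R)` with
`εᵀ ψ_n ε = (1 ⊥ ε₀)ᵀ ψ_n (1 ⊥ ε₀)`. -/
theorem psi_conjugate_one_perp {R : Type*} [CommRing R] (n : ℕ) (hn : 2 ≤ n)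
    (ε : (Matrix (Fin (2*n)) (Fin (2*n)) R)ˣ) (hε : ε ∈ Egrp R (2*n)) :
    ∃ ε₀ ∈ Egrp R (2*n-1),
      (ε : Matrix (Fin (2*n)) (Fin (2*n)) R)ᵀ * psi R n *
          (ε : Matrix (Fin (2*n)) (Fin (2*n)) R) =
        (onePerp (n := n) (ε₀ : Matrix (Fin (2*n-1)) (Fin (2*n-1)) R))ᵀ * psi R n *
          onePerp (n := n) (ε₀ : Matrix (Fin (2*n-1)) (Fin (2*n-1)) R) := by
  classical
  have hn1 : 0 < n := by omega
  have hε2 : ε ∈ (Subgroup.closure {g : (Matrix (Fin (2*n)) (Fin (2*n)) R)ˣ |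
      ∃ i j : Fin (2*n), ∃ a : R, i ≠ j ∧
        (↑g : Matrix (Fin (2*n)) (Fin (2*n)) R)
          = 1 + Matrix.single i j a}).toSubmonoid := hε
  rw [Subgroup.closure_toSubmonoid] at hε2
  obtain ⟨l, hl, hprod⟩ := Submonoid.exists_list_of_mem_closure hε2
  subst hprod
  clear hε hε2
  induction l using List.reverseRecOn with
  | nil =>
      refine ⟨1, one_mem _, ?_⟩
      rw [List.prod_nil, Units.val_one, Units.val_one, onePerp_one hn1]
  | append_singleton l g ih =>
      obtain ⟨ε₀, hε₀, heq⟩ := ih (fun y hy => hl y (List.mem_append.2 (Or.inl hy)))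
      have hg := hl g (by simp)
      rw [Set.mem_union] at hg
      obtain ⟨i, j, a, hij, hval⟩ : ∃ i j : Fin (2*n), ∃ a : R, i ≠ j ∧
          (↑g : Matrix (Fin (2*n)) (Fin (2*n)) R) = 1 + Matrix.single i j a := by
        rcases hg with hg | hg
        · exact hg
        · rw [Set.mem_inv] at hg
          obtain ⟨i, j, a, hij, hval⟩ := hg
          have hu : g⁻¹ = elemU (2*n) i j hij a := Units.ext hval
          have hg' : g = (elemU (2*n) i j hij a)⁻¹ := by rw [← hu, inv_inv]
          exact ⟨i, j, -a, hij, by rw [hg']; rfl⟩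
      rw [List.prod_append, List.prod_singleton]
      have e1 : (↑(l.prod * g) : Matrix (Fin (2*n)) (Fin (2*n)) R)ᵀ * psi R n
            * (↑(l.prod * g) : Matrix (Fin (2*n)) (Fin (2*n)) R)
          = ((onePerp (n := n) (↑ε₀ : Matrix (Fin (2*n-1)) (Fin (2*n-1)) R))
                * (↑g : Matrix (Fin (2*n)) (Fin (2*n)) R))ᵀ * psi R n
            * ((onePerp (n := n) (↑ε₀ : Matrix (Fin (2*n-1)) (Fin (2*n-1)) R))
                * (↑g : Matrix (Fin (2*n)) (Fin (2*n)) R)) := by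
        rw [Units.val_mul]
        exact sandwich _ _ _ _ heq
      by_cases hi0 : i.1 = 0
      · -- N case: row addition in the first row
        have hj0 : j.1 ≠ 0 := fun hc => hij (Fin.ext (by omega))
        have hival : i = ⟨0, by omega⟩ := Fin.ext hi0
        set y' : Fin (2*n) → R :=
          Pi.single j a ᵥ* onePerp (n := n)
            (↑(ε₀⁻¹) : Matrix (Fin (2*n-1)) (Fin (2*n-1)) R) with hy'
        clear_value y'
        have hy'0 : y' ⟨0, by omega⟩ = 0 := by
          rw [hy', vecMul_onePerp_at0 hn1, Pi.single_apply,
            if_neg (show ¬((⟨0, by omega⟩ : Fin (2*n)) = j) from fun hc => hj0 (by rw [← hc]))]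
        have hRv : y' ᵥ* onePerp (n := n) (↑ε₀ : Matrix (Fin (2*n-1)) (Fin (2*n-1)) R)
            = Pi.single j a := by
          rw [hy', vecMul_vecMul, onePerp_mul hn1]
          have hinv : (↑(ε₀⁻¹) : Matrix (Fin (2*n-1)) (Fin (2*n-1)) R)
              * (↑ε₀ : Matrix (Fin (2*n-1)) (Fin (2*n-1)) R) = 1 := by
            rw [← Units.val_mul]; simp
          rw [hinv, onePerp_one hn1, vecMul_one]
        have hη_g : onePerp (n := n) (↑ε₀ : Matrix (Fin (2*n-1)) (Fin (2*n-1)) R)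
              * (↑g : Matrix (Fin (2*n)) (Fin (2*n)) R)
            = (1 + vecMulVec (Pi.single (⟨0, by omega⟩ : Fin (2*n)) 1) y')
              * onePerp (n := n) (↑ε₀ : Matrix (Fin (2*n-1)) (Fin (2*n-1)) R) := by
          rw [hval, hival, std_eq_vmv', eta_mul_rowgen hn1, rowgen_mul_eta hn1, hRv]
        obtain ⟨κ, hκ, hκeq⟩ := Ncongr hn1 y' hy'0
        refine ⟨κ * ε₀, mul_mem hκ hε₀, ?_⟩
        rw [e1, hη_g,
          sandwich (1 + vecMulVec (Pi.single (⟨0, by omega⟩ : Fin (2*n)) 1) y')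
            (onePerp (n := n) (↑κ : Matrix (Fin (2*n-1)) (Fin (2*n-1)) R))
            (onePerp (n := n) (↑ε₀ : Matrix (Fin (2*n-1)) (Fin (2*n-1)) R)) (psi R n) hκeq,
          onePerp_mul hn1, ← Units.val_mul]
      · by_cases hj0 : j.1 = 0
        · -- M case: column addition in the first column
          have hjval : j = ⟨0, by omega⟩ := Fin.ext hj0
          set x' : Fin (2*n) → R :=
            onePerp (n := n) (↑ε₀ : Matrix (Fin (2*n-1)) (Fin (2*n-1)) R) *ᵥ Pi.single i a
            with hx'
          clear_value x'
          have hx'0 : x' ⟨0, by omega⟩ = 0 := by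
            rw [hx', onePerp_mulVec_at0 hn1, Pi.single_apply,
              if_neg (show ¬((⟨0, by omega⟩ : Fin (2*n)) = i) from fun hc => hi0 (by rw [← hc]))]
          have hη_g : onePerp (n := n) (↑ε₀ : Matrix (Fin (2*n-1)) (Fin (2*n-1)) R)
                * (↑g : Matrix (Fin (2*n)) (Fin (2*n)) R)
              = (1 + vecMulVec x' (Pi.single (⟨0, by omega⟩ : Fin (2*n)) 1))
                * onePerp (n := n) (↑ε₀ : Matrix (Fin (2*n-1)) (Fin (2*n-1)) R) := by
            rw [hval, hjval, std_eq_vmv, eta_mul_colgen hn1, colgen_mul_eta hn1, hx']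
          obtain ⟨κ, hκ, hκeq⟩ := Mcongr hn1 x' hx'0
          refine ⟨κ * ε₀, mul_mem hκ hε₀, ?_⟩
          rw [e1, hη_g,
            sandwich (1 + vecMulVec x' (Pi.single (⟨0, by omega⟩ : Fin (2*n)) 1))
              (onePerp (n := n) (↑κ : Matrix (Fin (2*n-1)) (Fin (2*n-1)) R))
              (onePerp (n := n) (↑ε₀ : Matrix (Fin (2*n-1)) (Fin (2*n-1)) R)) (psi R n) hκeq,
            onePerp_mul hn1, ← Units.val_mul]
        · -- inner case
          have hij' : (⟨i.1-1, by have := i.2; omega⟩ : Fin (2*n-1))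
              ≠ ⟨j.1-1, by have := j.2; omega⟩ := fun hc => hij (Fin.ext (by
                have h2 : i.1 - 1 = j.1 - 1 := congrArg Fin.val hc
                omega))
          have hgval : (↑g : Matrix (Fin (2*n)) (Fin (2*n)) R)
              = onePerp (n := n) (↑(elemU (2*n-1) ⟨i.1-1, by have := i.2; omega⟩
                  ⟨j.1-1, by have := j.2; omega⟩ hij' a)
                    : Matrix (Fin (2*n-1)) (Fin (2*n-1)) R) := by
            rw [hval]
            show _ = onePerp (n := n)
              (1 + Matrix.single (⟨i.1-1, by have := i.2; omega⟩ : Fin (2*n-1))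
                (⟨j.1-1, by have := j.2; omega⟩ : Fin (2*n-1)) a)
            rw [std_eq_vmv (⟨i.1-1, by have := i.2; omega⟩ : Fin (2*n-1))
                (⟨j.1-1, by have := j.2; omega⟩ : Fin (2*n-1)) a,
              onePerp_one_add, shiftUp_single i hi0 a, shiftUp_single j hj0 (1:R),
              ← std_eq_vmv]
          refine ⟨ε₀ * elemU (2*n-1) ⟨i.1-1, by have := i.2; omega⟩
              ⟨j.1-1, by have := j.2; omega⟩ hij' a,
            mul_mem hε₀ (elemU_mem _ _ hij' a), ?_⟩
          rw [e1, hgval, onePerp_mul hn1, ← Units.val_mul]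

end PaperESp
end
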